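/- arXiv:0905.2215 — 3 statements merged into one kernel-verified Lean document; each statement's English description precedes it below -/
import Mathlib

section
/- Let q = exp(iπ/p) and let ℂ_q[z,∂] be the U_q sl(2)-module algebra with E ▷ z^m = −q^m[m]z^{m+1}, F ▷ z^m = [m]q^{1−m}z^{m−1}, E ▷ ∂^n = q^{1−n}[n]∂^{n−1}, F ▷ ∂^n = −q^n[n]∂^{n+1}, K ▷ z^m∂^n = q^{2(m−n)}z^m∂^n. Then the element w = Σ_{i=1}^{p−1} (1/[i]_q) z^i ∂^i satisfies E ▷ w = c₁ z and F ▷ w = c₂ ∂ for nonzero constants c₁, c₂; in particular w generates a 2p-dimensional indecomposable submodule (the projective cover P₁⁺ of the trivial module) containing 1, z, …, z^{p−1}, ∂, …, ∂^{p−1}. -/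
/-!
STATEMENT 14: In the `U_q sl(2)`-module algebra `ℂ_q[z,∂]` (`q = exp(iπ/p)`), the
element `w = ∑_{i=1}^{p−1} (1/[i]_q) z^i ∂^i` satisfies `E ▷ w = c₁ z` and
`F ▷ w = c₂ ∂` for nonzero constants `c₁, c₂`; in particular `w` generates a
`2p`-dimensional indecomposable submodule (the projective cover `P₁⁺` of the trivial
module) containing `1, z, …, z^{p−1}, ∂, …, ∂^{p−1}`.
-/

noncomputable section

/-- The q-integer `[n]_q`. -/
def qint (q : ℂ) (n : ℕ) : ℂ := (q ^ n - q⁻¹ ^ n) / (q - q⁻¹)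

/-- Relations of `ℂ_q[z,∂]`: `z = X 0`, `∂ = X 1`. -/
inductive cqRel (p : ℕ) (q : ℂ) : FreeAlgebra ℂ (Fin 2) → FreeAlgebra ℂ (Fin 2) → Prop
  | znil : cqRel p q ((FreeAlgebra.ι ℂ (0 : Fin 2)) ^ p) 0
  | dnil : cqRel p q ((FreeAlgebra.ι ℂ (1 : Fin 2)) ^ p) 0
  | dz : cqRel p q
      (FreeAlgebra.ι ℂ (1 : Fin 2) * FreeAlgebra.ι ℂ (0 : Fin 2))
      ((q - q⁻¹) • (1 : FreeAlgebra ℂ (Fin 2)) +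
        ((q ^ 2)⁻¹) • (FreeAlgebra.ι ℂ (0 : Fin 2) * FreeAlgebra.ι ℂ (1 : Fin 2)))

/-- The algebra `ℂ_q[z,∂]`. -/
def CqAlg (p : ℕ) (q : ℂ) : Type := RingQuot (cqRel p q)

instance (p : ℕ) (q : ℂ) : Ring (CqAlg p q) := inferInstanceAs (Ring (RingQuot (cqRel p q)))
instance (p : ℕ) (q : ℂ) : Algebra ℂ (CqAlg p q) :=
  inferInstanceAs (Algebra ℂ (RingQuot (cqRel p q)))

def Zg (p : ℕ) (q : ℂ) : CqAlg p q :=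
  RingQuot.mkAlgHom ℂ (cqRel p q) (FreeAlgebra.ι ℂ (0 : Fin 2))

def Dg (p : ℕ) (q : ℂ) : CqAlg p q :=
  RingQuot.mkAlgHom ℂ (cqRel p q) (FreeAlgebra.ι ℂ (1 : Fin 2))

section NumFacts'



variable {p : ℕ} {q : ℂ} (hp : 2 ≤ p) (hq : q = Complex.exp (Real.pi * Complex.I / p))

include hp hq

omit hp in
theorem hq0 : q ≠ 0 := by rw [hq]; exact Complex.exp_ne_zero _

theorem hq2k {k : ℕ} (h1 : 0 < k) (h2 : k < p) : q ^ (2 * k) ≠ 1 := by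
  have hp0 : (p : ℂ) ≠ 0 := Nat.cast_ne_zero.mpr (by omega)
  intro h
  rw [hq, ← Complex.exp_nat_mul, Complex.exp_eq_one_iff] at h
  obtain ⟨n, hn⟩ := h
  have hπI : (Real.pi : ℂ) * Complex.I ≠ 0 :=
    mul_ne_zero (by simpa using Real.pi_ne_zero) Complex.I_ne_zero
  have hk : ((2 * k : ℕ) : ℂ) * (Real.pi * Complex.I) = ((n : ℂ) * 2 * p) * (Real.pi * Complex.I) := by
    field_simp at hn
    push_cast at hn ⊢
    linear_combination (↑Real.pi * Complex.I) * hn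
  have hk2 : ((2 * k : ℕ) : ℂ) = (n : ℂ) * 2 * p := mul_right_cancel₀ hπI hk
  have hk3 : ((2 * k : ℕ) : ℤ) = n * 2 * p := by exact_mod_cast hk2
  have hk4 : (k : ℤ) = n * p := by push_cast at hk3; linarith
  have hd : (p : ℤ) ∣ (k : ℤ) := ⟨n, by linarith⟩
  have hd2 : p ∣ k := Int.ofNat_dvd.mp (by simpa using hd)
  exact absurd (Nat.le_of_dvd h1 hd2) (by omega)

theorem hq2p_fact : q ^ (2 * p) = 1 := by
  have hp0 : (p : ℂ) ≠ 0 := Nat.cast_ne_zero.mpr (by omega)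
  rw [hq, ← Complex.exp_nat_mul, Complex.exp_eq_one_iff]
  refine ⟨1, ?_⟩
  push_cast
  field_simp

theorem hqpne : q - q⁻¹ ≠ 0 := by
  have h2 : q ^ (2 * 1) ≠ 1 := hq2k hp hq one_pos (by omega)
  have h0 : q ≠ 0 := hq0 hq
  intro h
  apply h2
  have hh : q * q = 1 := by
    field_simp at h
    linear_combination h
  calc q ^ (2 * 1) = q * q := by ring
  _ = 1 := hh

theorem hqint {k : ℕ} (h1 : 0 < k) (h2 : k < p) : qint q k ≠ 0 := by
  have h0 : q ≠ 0 := hq0 hq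
  have hd := hqpne hp hq
  have hk0 : q ^ k ≠ 0 := pow_ne_zero _ h0
  have hnum : q ^ k - q⁻¹ ^ k ≠ 0 := by
    intro h
    apply hq2k hp hq h1 h2
    rw [inv_pow] at h
    have hthis : q ^ k = (q ^ k)⁻¹ := by linear_combination h
    calc q ^ (2 * k) = q ^ k * q ^ k := by rw [two_mul, pow_add]
    _ = 1 := by nth_rewrite 2 [hthis]; exact mul_inv_cancel₀ hk0
  exact div_ne_zero hnum hd



end NumFacts'


section M2
variable (p : ℕ) (q : ℂ)

def dco (m : ℕ) : ℂ := q - q * (q⁻¹) ^ (2 * m)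

def Zm : Matrix (Fin p) (Fin p) ℂ := fun i j => if (i : ℕ) = (j : ℕ) + 1 then 1 else 0
def Dm : Matrix (Fin p) (Fin p) ℂ := fun i j => if (j : ℕ) = (i : ℕ) + 1 then dco q j else 0

lemma sum_if_nat (g : Fin p → ℂ) (m : ℕ) :
    (∑ k : Fin p, if (k : ℕ) = m then g k else 0) = if h : m < p then g ⟨m, h⟩ else 0 := by
  split
  · next h =>
    rw [Finset.sum_eq_single ⟨m, h⟩]
    · simp
    · intro k _ hk
      rw [if_neg]
      intro hkm
      exact hk (Fin.ext hkm)
    · intro hk; exact absurd (Finset.mem_univ _) hk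
  · next h =>
    apply Finset.sum_eq_zero
    intro k _
    rw [if_neg]
    omega

lemma Zm_pow (a : ℕ) (i j : Fin p) :
    (Zm p ^ a) i j = if (i : ℕ) = (j : ℕ) + a then 1 else 0 := by
  induction a generalizing i j with
  | zero => simp [Matrix.one_apply, Fin.ext_iff]
  | succ a ih =>
    rw [pow_succ, Matrix.mul_apply]
    have : ∀ k : Fin p, (Zm p ^ a) i k * Zm p k j
        = if (k : ℕ) = (j : ℕ) + 1 then (Zm p ^ a) i k else 0 := by
      intro k
      simp only [Zm]
      split <;> simp
    simp_rw [this, sum_if_nat]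
    split
    · next h =>
      rw [ih]
      congr 1
      simp only [eq_iff_iff]
      omega
    · next h =>
      rw [if_neg]
      omega

lemma Dm_pow (b : ℕ) (i j : Fin p) :
    (Dm p q ^ b) i j = if (j : ℕ) = (i : ℕ) + b then
      (∏ t ∈ Finset.range b, dco q ((i : ℕ) + 1 + t)) else 0 := by
  induction b generalizing i j with
  | zero => simp [Matrix.one_apply, Fin.ext_iff, eq_comm]
  | succ b ih =>
    rw [pow_succ, Matrix.mul_apply]
    have : ∀ k : Fin p, (Dm p q ^ b) i k * Dm p q k j
        = if (k : ℕ) = (i : ℕ) + b then (Dm p q ^ b) i k * Dm p q k j else 0 := by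
      intro k
      split
      · rfl
      · next h =>
        rw [ih, if_neg (by omega), zero_mul]
    rw [Finset.sum_congr rfl (fun k _ => this k), sum_if_nat]
    split
    · next h =>
      rw [ih, if_pos rfl]
      simp only [Dm, Fin.val_mk]
      split
      · next h2 =>
        rw [if_pos (by omega), Finset.prod_range_succ]
        have hj : (j : ℕ) = ↑i + 1 + b := by omega
        rw [hj]
      · next h2 =>
        rw [if_neg (by omega), mul_zero]
    · next h =>
      rw [if_neg (by omega)]

lemma Zm_pow_p : (Zm p) ^ p = 0 := by
  ext i j
  rw [Zm_pow]
  rw [if_neg (by omega)]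
  rfl

lemma Dm_pow_p : (Dm p q) ^ p = 0 := by
  ext i j
  rw [Dm_pow]
  rw [if_neg (by omega)]
  rfl

end M2

section M3
variable (p : ℕ) (q : ℂ)

lemma dco_zero : dco q 0 = 0 := by simp [dco]

lemma dco_rec (h0 : q ≠ 0) (m : ℕ) : dco q (m + 1) = (q - q⁻¹) + (q ^ 2)⁻¹ * dco q m := by
  simp only [dco]
  field_simp
  have h : q ^ 2 * (q⁻¹) ^ 2 = 1 := by rw [← mul_pow, mul_inv_cancel₀ h0, one_pow]
  rw [one_div]
  linear_combination (-(q⁻¹) ^ (2 * m)) * h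

lemma dco_p (h0 : q ≠ 0) (hq2p : q ^ (2 * p) = 1) : dco q p = 0 := by
  simp only [dco, inv_pow, hq2p]
  simp

lemma dco_ne (h0 : q ≠ 0) {m : ℕ} (hm : q ^ (2 * m) ≠ 1) : dco q m ≠ 0 := by
  simp only [dco, inv_pow]
  intro h
  apply hm
  have hk0 : q ^ (2 * m) ≠ 0 := pow_ne_zero _ h0
  field_simp at h
  have h2 : q * q ^ (2 * m) = q * 1 := by linear_combination h
  exact mul_left_cancel₀ h0 h2

lemma DZ_rel (h0 : q ≠ 0) (hq2p : q ^ (2 * p) = 1) :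
    Dm p q * Zm p = (q - q⁻¹) • (1 : Matrix (Fin p) (Fin p) ℂ) + (q ^ 2)⁻¹ • (Zm p * Dm p q) := by
  have hdrec : ∀ m : ℕ, dco q (m + 1) = (q - q⁻¹) + (q ^ 2)⁻¹ * dco q m := dco_rec q h0
  have hdp : dco q p = 0 := dco_p p q h0 hq2p
  ext i j
  rw [Matrix.mul_apply]
  have hL : ∀ k : Fin p, Dm p q i k * Zm p k j
      = if (k : ℕ) = (i : ℕ) + 1 then dco q (k : ℕ) * Zm p k j else 0 := by
    intro k
    simp only [Dm]
    split <;> simp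
  rw [Finset.sum_congr rfl (fun k _ => hL k), sum_if_nat]
  rw [Matrix.add_apply, Matrix.smul_apply, Matrix.smul_apply, Matrix.one_apply, Matrix.mul_apply]
  have hR : ∀ k : Fin p, Zm p i k * Dm p q k j
      = if (k : ℕ) = (j : ℕ) - 1 ∧ 1 ≤ (j : ℕ) then Zm p i k * dco q (j : ℕ) else 0 := by
    intro k
    simp only [Dm]
    split
    · next hc => rw [if_pos (by omega)]
    · next hc =>
      rw [if_neg]
      · ring
      · omega
  rw [Finset.sum_congr rfl (fun k _ => hR k)]
  by_cases hj1 : 1 ≤ (j : ℕ)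
  · simp only [hj1, and_true]
    rw [sum_if_nat, dif_pos (by omega : (j : ℕ) - 1 < p)]
    simp only [Zm, Fin.val_mk]
    by_cases hij : i = j
    · subst hij
      rw [if_pos rfl, if_pos (by omega : (i : ℕ) = (i : ℕ) - 1 + 1)]
      by_cases h1 : (i : ℕ) + 1 < p
      · rw [dif_pos h1, if_pos rfl]
        have e2 : (i : ℕ) = (i : ℕ) - 1 + 1 := by omega
        rw [e2, hdrec ((i : ℕ) - 1 + 1), hdrec ((i : ℕ) - 1)]
        simp only [smul_eq_mul]
        ring
      · rw [dif_neg h1]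
        have hip : ((i : ℕ) - 1 + 1) + 1 = p := by omega
        have hzero : dco q (((i : ℕ) - 1 + 1) + 1) = 0 := by rw [hip]; exact hdp
        rw [hdrec] at hzero
        have e2 : (i : ℕ) = (i : ℕ) - 1 + 1 := by omega
        rw [e2]
        simp only [smul_eq_mul]
        linear_combination -hzero
    · have hvij : (i : ℕ) ≠ (j : ℕ) := fun h => hij (Fin.ext h)
      rw [if_neg hij, if_neg (by omega : ¬(i : ℕ) = (j : ℕ) - 1 + 1)]
      rw [zero_mul, smul_zero, smul_zero, add_zero]
      by_cases h1 : (i : ℕ) + 1 < p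
      · rw [dif_pos h1, if_neg (by omega), mul_zero]
      · rw [dif_neg h1]
  · rw [Finset.sum_eq_zero (fun k _ => by rw [if_neg (by omega)]), smul_zero, add_zero]
    have hj0 : (j : ℕ) = 0 := by omega
    by_cases hij : i = j
    · subst hij
      rw [if_pos rfl]
      have e1 : (i : ℕ) + 1 = 0 + 1 := by omega
      by_cases h1 : (i : ℕ) + 1 < p
      · rw [dif_pos h1]
        simp only [Zm, Fin.val_mk]
        rw [if_true, e1, hdrec, dco_zero]
        simp only [smul_eq_mul]
        ring
      · rw [dif_neg h1]
        have hp1 : p = 0 + 1 := by omega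
        have hzero : dco q (0 + 1) = 0 := by rw [← hp1]; exact hdp
        rw [hdrec, dco_zero] at hzero
        simp only [smul_eq_mul]
        linear_combination -hzero
    · have hvij : (i : ℕ) ≠ (j : ℕ) := fun h => hij (Fin.ext h)
      rw [if_neg hij, smul_zero]
      by_cases h1 : (i : ℕ) + 1 < p
      · rw [dif_pos h1]
        simp only [Zm, Fin.val_mk]
        rw [if_neg (by omega), mul_zero]
      · rw [dif_neg h1]

end M3

section Telescope
variable {M : Type*} [AddCommGroup M]

theorem telescope (f : ℕ → M) (n : ℕ) :
    ∑ i ∈ Finset.Icc 1 n, (f (i - 1) - f i) = f 0 - f n := by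
  induction n with
  | zero => simp
  | succ n ih =>
    rw [Finset.sum_Icc_succ_top (by omega), ih]
    simp only [Nat.add_sub_cancel]
    abel

end Telescope

section Hom
variable (p : ℕ) (q : ℂ)

def toMat (h0 : q ≠ 0) (hq2p : q ^ (2 * p) = 1) : CqAlg p q →ₐ[ℂ] Matrix (Fin p) (Fin p) ℂ :=
  RingQuot.liftAlgHom ℂ ⟨FreeAlgebra.lift ℂ ![Zm p, Dm p q], by
    rintro x y h
    induction h with
    | znil =>
      simp only [map_pow, FreeAlgebra.lift_ι_apply, Matrix.cons_val_zero, map_zero]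
      exact Zm_pow_p p
    | dnil =>
      simp only [map_pow, FreeAlgebra.lift_ι_apply, Matrix.cons_val_one, Matrix.head_cons,
        map_zero]
      exact Dm_pow_p p q
    | dz =>
      simp only [map_mul, map_add, map_smul, map_one, FreeAlgebra.lift_ι_apply,
        Matrix.cons_val_zero, Matrix.cons_val_one, Matrix.head_cons]
      exact DZ_rel p q h0 hq2p⟩

lemma toMat_Z (h0 : q ≠ 0) (hq2p : q ^ (2 * p) = 1) : toMat p q h0 hq2p (Zg p q) = Zm p := by
  rw [Zg, toMat]
  refine (RingQuot.liftAlgHom_mkAlgHom_apply _ _ _ _).trans ?_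
  simp

lemma toMat_D (h0 : q ≠ 0) (hq2p : q ^ (2 * p) = 1) : toMat p q h0 hq2p (Dg p q) = Dm p q := by
  rw [Dg, toMat]
  refine (RingQuot.liftAlgHom_mkAlgHom_apply _ _ _ _).trans ?_
  simp

lemma Zg_pow_p : Zg p q ^ p = 0 := by
  have h1 : Zg p q ^ p = RingQuot.mkAlgHom ℂ (cqRel p q) (FreeAlgebra.ι ℂ (0 : Fin 2) ^ p) := by
    rw [map_pow, Zg]
    rfl
  rw [h1, RingQuot.mkAlgHom_rel ℂ cqRel.znil, map_zero]
  rfl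

lemma Dg_pow_p : Dg p q ^ p = 0 := by
  have h1 : Dg p q ^ p = RingQuot.mkAlgHom ℂ (cqRel p q) (FreeAlgebra.ι ℂ (1 : Fin 2) ^ p) := by
    rw [map_pow, Dg]
    rfl
  rw [h1, RingQuot.mkAlgHom_rel ℂ cqRel.dnil, map_zero]
  rfl

end Hom

section Indep
variable (p : ℕ) (q : ℂ)

def vfam (w : CqAlg p q) : Fin p ⊕ Fin p → CqAlg p q :=
  fun x => match x with
  | .inl a => Zg p q ^ (a : ℕ)
  | .inr b => if (b : ℕ) = 0 then w else Dg p q ^ (b : ℕ)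

lemma ZD_apply (i : ℕ) (r c : Fin p) :
    (Zm p ^ i * Dm p q ^ i) r c =
      if (c : ℕ) = (r : ℕ) ∧ i ≤ (r : ℕ) then
        ∏ t ∈ Finset.range i, dco q ((r : ℕ) - i + 1 + t) else 0 := by
  rw [Matrix.mul_apply]
  by_cases hir : i ≤ (r : ℕ)
  · have hterm : ∀ k : Fin p, (Zm p ^ i) r k * (Dm p q ^ i) k c
        = if (k : ℕ) = (r : ℕ) - i then (Zm p ^ i) r k * (Dm p q ^ i) k c else 0 := by
      intro k
      split
      · rfl
      · next h => rw [Zm_pow, if_neg (by omega), zero_mul]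
    rw [Finset.sum_congr rfl (fun k _ => hterm k), sum_if_nat, dif_pos (by omega : (r:ℕ) - i < p)]
    rw [Zm_pow, Dm_pow]
    simp only [Fin.val_mk]
    rw [if_pos (by omega)]
    rw [one_mul]
    split
    · next h => rw [if_pos (by omega)]
    · next h => rw [if_neg (by omega)]
  · rw [if_neg (by omega), Finset.sum_eq_zero]
    intro k _
    rw [Zm_pow, if_neg (by omega), zero_mul]

theorem indep (hp : 2 ≤ p) (h0 : q ≠ 0) (hq2p : q ^ (2 * p) = 1)
    (hd : ∀ m : ℕ, 0 < m → m < p → dco q m ≠ 0)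
    (hq1 : (qint q 1)⁻¹ ≠ 0)
    (w : CqAlg p q)
    (hw : w = ∑ i ∈ Finset.Icc 1 (p - 1), (qint q i)⁻¹ • (Zg p q ^ i * Dg p q ^ i)) :
    LinearIndependent ℂ (vfam p q w) := by
  set φ := toMat p q h0 hq2p with hφ
  apply LinearIndependent.of_comp φ.toLinearMap
  rw [Fintype.linearIndependent_iff]
  intro g hg
  set Wm : Matrix (Fin p) (Fin p) ℂ :=
    ∑ i ∈ Finset.Icc 1 (p - 1), (qint q i)⁻¹ • (Zm p ^ i * Dm p q ^ i) with hWm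
  have hφw : φ w = Wm := by
    rw [hw, map_sum, hWm]
    refine Finset.sum_congr rfl (fun i _ => ?_)
    rw [map_smul, map_mul, map_pow, map_pow, toMat_Z, toMat_D]
  have hM : ∀ x, (⇑φ.toLinearMap ∘ vfam p q w) x =
      (match x with
       | Sum.inl a => Zm p ^ (a : ℕ)
       | Sum.inr b => if (b : ℕ) = 0 then Wm else Dm p q ^ (b : ℕ)) := by
    rintro (a | b)
    · simp only [Function.comp_apply, vfam, AlgHom.toLinearMap_apply, map_pow, hφ, toMat_Z]
    · simp only [Function.comp_apply, vfam, AlgHom.toLinearMap_apply]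
      split
      · exact hφw
      · rw [hφ, map_pow, toMat_D]
  simp only [hM] at hg
  rw [Fintype.sum_sum_type] at hg
  have hent : ∀ r c : Fin p,
      (∑ a : Fin p, g (Sum.inl a) * (Zm p ^ (a : ℕ)) r c)
      + (∑ b : Fin p, g (Sum.inr b) *
          (if (b : ℕ) = 0 then Wm else Dm p q ^ (b : ℕ)) r c) = 0 := by
    intro r c
    have h1 := congrFun (congrFun hg r) c
    simpa only [Matrix.add_apply, Matrix.sum_apply, Matrix.smul_apply, smul_eq_mul,
      Matrix.zero_apply] using h1
  have hWent : ∀ r c : Fin p, Wm r c =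
      ∑ i ∈ Finset.Icc 1 (p - 1), (qint q i)⁻¹ * ((Zm p ^ i * Dm p q ^ i) r c) := by
    intro r c
    rw [hWm, Matrix.sum_apply]
    exact Finset.sum_congr rfl (fun i _ => by rw [Matrix.smul_apply, smul_eq_mul])
  have hW0 : ∀ r c : Fin p, ((c : ℕ) ≠ (r : ℕ) ∨ (r : ℕ) = 0) → Wm r c = 0 := by
    intro r c h
    rw [hWent, Finset.sum_eq_zero]
    intro i hi
    rw [ZD_apply, if_neg (by rw [Finset.mem_Icc] at hi; omega), mul_zero]
  have hW1 : Wm ⟨1, by omega⟩ ⟨1, by omega⟩ = (qint q 1)⁻¹ * dco q 1 := by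
    rw [hWent, Finset.sum_eq_single 1]
    · rw [ZD_apply]
      simp only [Fin.val_mk]
      rw [if_pos (by simp)]
      simp
    · intro i hi hne
      rw [Finset.mem_Icc] at hi
      rw [ZD_apply]
      simp only [Fin.val_mk]
      rw [if_neg (by omega), mul_zero]
    · intro h
      exact absurd (Finset.mem_Icc.mpr ⟨le_refl 1, by omega⟩) h
  have hstepA : ∀ a : Fin p, g (Sum.inl a) = 0 := by
    intro a
    have h1 := hent a ⟨0, by omega⟩
    rw [Fintype.sum_eq_single a (fun a' ha' => by
      rw [Zm_pow]
      simp only [Fin.val_mk]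
      rw [if_neg (fun h => ha' (Fin.ext (by omega))), mul_zero])] at h1
    rw [Zm_pow] at h1
    simp only [Fin.val_mk] at h1
    rw [if_pos (by omega), mul_one] at h1
    rw [Finset.sum_eq_zero (fun b _ => ?_)] at h1
    · simpa using h1
    · by_cases hb : (b : ℕ) = 0
      · rw [if_pos hb, hW0]
        · ring
        · by_cases ha0 : (a : ℕ) = 0
          · right; exact ha0
          · left; simp only [Fin.val_mk]; omega
      · rw [if_neg hb, Dm_pow]
        simp only [Fin.val_mk]
        rw [if_neg (by omega), mul_zero]
  have hstepB : ∀ b : Fin p, (b : ℕ) ≠ 0 → g (Sum.inr b) = 0 := by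
    intro b hb
    have h1 := hent ⟨0, by omega⟩ b
    rw [Finset.sum_eq_zero (fun a' _ => by rw [hstepA, zero_mul])] at h1
    rw [Fintype.sum_eq_single b (fun b' hb' => ?_)] at h1
    · rw [if_neg hb, Dm_pow] at h1
      simp only [Fin.val_mk] at h1
      rw [if_pos (by omega), zero_add] at h1
      have hprod : (∏ t ∈ Finset.range (b : ℕ), dco q (0 + 1 + t)) ≠ 0 := by
        apply Finset.prod_ne_zero_iff.mpr
        intro t ht
        rw [Finset.mem_range] at ht
        exact hd (0 + 1 + t) (by omega) (by omega)
      rcases mul_eq_zero.mp h1 with h | h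
      · exact h
      · exact absurd h hprod
    · by_cases hb'0 : (b' : ℕ) = 0
      · rw [if_pos hb'0, hW0 _ _ (Or.inr rfl), mul_zero]
      · rw [if_neg hb'0, Dm_pow]
        simp only [Fin.val_mk]
        rw [if_neg (fun h => hb' (Fin.ext (by omega))), mul_zero]
  have hstepC : ∀ b : Fin p, (b : ℕ) = 0 → g (Sum.inr b) = 0 := by
    intro b hb
    have h1 := hent ⟨1, by omega⟩ ⟨1, by omega⟩
    rw [Finset.sum_eq_zero (fun a' _ => by rw [hstepA, zero_mul])] at h1
    rw [Fintype.sum_eq_single b (fun b' hb' => ?_)] at h1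
    · rw [if_pos hb, hW1, zero_add] at h1
      rcases mul_eq_zero.mp h1 with h | h
      · exact h
      · rcases mul_eq_zero.mp h with h' | h'
        · exact absurd h' hq1
        · exact absurd h' (hd 1 one_pos (by omega))
    · have hb'0 : (b' : ℕ) ≠ 0 := fun h => hb' (Fin.ext (by omega))
      rw [if_neg hb'0, Dm_pow]
      simp only [Fin.val_mk]
      rw [if_neg (by omega), mul_zero]
  rintro (a | b)
  · exact hstepA a
  · by_cases hb : (b : ℕ) = 0
    · exact hstepC b hb
    · exact hstepB b hb

end Indep


section TpowSec
variable {M : Type*} [AddCommGroup M] [Module ℂ M]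

def Tpow (q : ℂ) (K : M →ₗ[ℂ] M) : ℕ → (M →ₗ[ℂ] M)
  | 0 => LinearMap.id
  | (k+1) => ((K - (q ^ (2*(k+1))) • LinearMap.id) ∘ₗ
      (K - (q ^ (2*(k+1)))⁻¹ • LinearMap.id)) ∘ₗ Tpow q K k

lemma Tpow_eigen (q : ℂ) (K : M →ₗ[ℂ] M) (μ : ℂ) (u : M) (hu : K u = μ • u) (k : ℕ) :
    Tpow q K k u = (∏ j ∈ Finset.Icc 1 k, ((μ - q ^ (2*j)) * (μ - (q ^ (2*j))⁻¹))) • u := by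
  induction k with
  | zero => simp [Tpow]
  | succ k ih =>
    have hc : ∀ c : ℂ, ∀ s : ℂ,
        (K - c • (LinearMap.id : M →ₗ[ℂ] M)) (s • u) = (s * (μ - c)) • u := by
      intro c s
      rw [map_smul, LinearMap.sub_apply, LinearMap.smul_apply, LinearMap.id_apply, hu,
        ← sub_smul, smul_smul]
    rw [Tpow, LinearMap.comp_apply, LinearMap.comp_apply, ih, hc, hc,
      Finset.prod_Icc_succ_top (by omega : 1 ≤ k + 1)]
    congr 1
    ring

lemma Tpow_mem (q : ℂ) (K : M →ₗ[ℂ] M) (W' : Submodule ℂ M)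
    (hKW : ∀ x ∈ W', K x ∈ W') (k : ℕ) : ∀ x ∈ W', Tpow q K k x ∈ W' := by
  induction k with
  | zero => intro x hx; simpa [Tpow] using hx
  | succ k ih =>
    intro x hx
    have h1 : ∀ c : ℂ, ∀ y ∈ W', (K - c • (LinearMap.id : M →ₗ[ℂ] M)) y ∈ W' := by
      intro c y hy
      rw [LinearMap.sub_apply, LinearMap.smul_apply, LinearMap.id_apply]
      exact W'.sub_mem (hKW y hy) (W'.smul_mem c hy)
    rw [Tpow, LinearMap.comp_apply, LinearMap.comp_apply]
    exact h1 _ _ (h1 _ _ (ih x hx))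

end TpowSec


theorem cq_projective_cover_of_trivial_module
    (p : ℕ) (hp : 2 ≤ p)
    (q : ℂ) (hq : q = Complex.exp (Real.pi * Complex.I / p))
    -- the `U_q sl(2)`-module algebra structure of `ℂ_q[z,∂]`
    (actE actF actK actKinv : CqAlg p q →ₗ[ℂ] CqAlg p q)
    (hE : ∀ m : ℕ, actE (Zg p q ^ m) = (-(q ^ m) * qint q m) • Zg p q ^ (m + 1))
    (hF : ∀ m : ℕ, actF (Zg p q ^ m) = (qint q m * q ^ ((1 : ℤ) - m)) • Zg p q ^ (m - 1))
    (hE' : ∀ n : ℕ, actE (Dg p q ^ n) = (q ^ ((1 : ℤ) - n) * qint q n) • Dg p q ^ (n - 1))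
    (hF' : ∀ n : ℕ, actF (Dg p q ^ n) = (-(q ^ n) * qint q n) • Dg p q ^ (n + 1))
    (hK : ∀ m n : ℕ, actK (Zg p q ^ m * Dg p q ^ n)
        = (q ^ (2 * ((m : ℤ) - n))) • (Zg p q ^ m * Dg p q ^ n))
    (hKinv : ∀ m n : ℕ, actKinv (Zg p q ^ m * Dg p q ^ n)
        = (q ^ (-2 * ((m : ℤ) - n))) • (Zg p q ^ m * Dg p q ^ n))
    (hLeibE : ∀ a b : CqAlg p q, actE (a * b) = a * actE b + actE a * actK b)
    (hLeibF : ∀ a b : CqAlg p q, actF (a * b) = actKinv a * actF b + actF a * b)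
    -- the element `w = ∑_{i=1}^{p−1} (1/[i]_q) z^i ∂^i`
    (w : CqAlg p q)
    (hw : w = ∑ i ∈ Finset.Icc 1 (p - 1), (qint q i)⁻¹ • (Zg p q ^ i * Dg p q ^ i)) :
    (∃ c₁ c₂ : ℂ, c₁ ≠ 0 ∧ c₂ ≠ 0 ∧ actE w = c₁ • Zg p q ∧ actF w = c₂ • Dg p q) ∧
    -- `w` generates a 2p-dimensional indecomposable submodule containing
    -- `1, z, …, z^{p−1}, ∂, …, ∂^{p−1}`
    (∃ W : Submodule ℂ (CqAlg p q),
      (w ∈ W ∧ ∀ x ∈ W, actE x ∈ W ∧ actF x ∈ W ∧ actK x ∈ W ∧ actKinv x ∈ W) ∧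
      (∀ W' : Submodule ℂ (CqAlg p q),
        (w ∈ W' ∧ ∀ x ∈ W', actE x ∈ W' ∧ actF x ∈ W' ∧ actK x ∈ W' ∧ actKinv x ∈ W') →
        W ≤ W') ∧
      Module.finrank ℂ W = 2 * p ∧
      (∀ i : ℕ, i < p → Zg p q ^ i ∈ W ∧ Dg p q ^ i ∈ W) ∧
      -- indecomposability (as a module over the given operators)
      (∀ W1 W2 : Submodule ℂ (CqAlg p q),
        (∀ x ∈ W1, actE x ∈ W1 ∧ actF x ∈ W1 ∧ actK x ∈ W1 ∧ actKinv x ∈ W1) →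
        (∀ x ∈ W2, actE x ∈ W2 ∧ actF x ∈ W2 ∧ actK x ∈ W2 ∧ actKinv x ∈ W2) →
        W1 ⊔ W2 = W → W1 ⊓ W2 = ⊥ → W1 = ⊥ ∨ W2 = ⊥)) := by
  have h0 : q ≠ 0 := hq0 hq
  have hqd : q - q⁻¹ ≠ 0 := hqpne hp hq
  have hqi : ∀ k : ℕ, 0 < k → k < p → qint q k ≠ 0 := fun k h1 h2 => hqint hp hq h1 h2
  have hq2p : q ^ (2 * p) = 1 := hq2p_fact hp hq
  -- K acts on Dg powers
  have hKD : ∀ i : ℕ, actK (Dg p q ^ i) = ((q ^ (2 * i) : ℂ))⁻¹ • Dg p q ^ i := by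
    intro i
    have h := hK 0 i
    rw [pow_zero, one_mul] at h
    have e : (2 * (((0 : ℕ) : ℤ) - (i : ℤ))) = -((2 * i : ℕ) : ℤ) := by push_cast; ring
    rw [e, zpow_neg, zpow_natCast] at h
    exact h
  have hKinvZ : ∀ i : ℕ, actKinv (Zg p q ^ i) = ((q ^ (2 * i) : ℂ))⁻¹ • Zg p q ^ i := by
    intro i
    have h := hKinv i 0
    rw [pow_zero, mul_one] at h
    have e : (-2 * ((i : ℤ) - ((0 : ℕ) : ℤ))) = -((2 * i : ℕ) : ℤ) := by push_cast; ring
    rw [e, zpow_neg, zpow_natCast] at h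
    exact h
  -- scalar identities
  have spow : ∀ i : ℕ, 1 ≤ i → q ^ ((1 : ℤ) - i) = ((q ^ (i - 1) : ℂ))⁻¹ := by
    intro i hi
    rw [zpow_sub₀ h0, zpow_one, zpow_natCast, inv_eq_one_div,
      div_eq_div_iff (pow_ne_zero i h0) (pow_ne_zero (i - 1) h0), one_mul, ← pow_succ']
    congr 1
    omega
  have spow2 : ∀ i : ℕ, q ^ i * ((q ^ (2 * i) : ℂ))⁻¹ = ((q ^ i : ℂ))⁻¹ := by
    intro i
    rw [two_mul, pow_add, mul_inv]
    rw [mul_comm (q ^ i)⁻¹, ← mul_assoc, mul_inv_cancel₀ (pow_ne_zero i h0), one_mul]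
  set f : ℕ → CqAlg p q := fun j => ((q ^ j : ℂ))⁻¹ • (Zg p q ^ (j + 1) * Dg p q ^ j) with hf
  have hterm : ∀ i : ℕ, 1 ≤ i → i ≤ p - 1 →
      (qint q i)⁻¹ • actE (Zg p q ^ i * Dg p q ^ i) = f (i - 1) - f i := by
    intro i hi1 hi2
    have hqiv : (qint q i)⁻¹ * qint q i = 1 := inv_mul_cancel₀ (hqi i (by omega) (by omega))
    rw [hLeibE, hE' i, hE i, hKD i]
    rw [mul_smul_comm, smul_mul_assoc, mul_smul_comm, smul_smul, smul_add, smul_smul, smul_smul]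
    have e1 : (qint q i)⁻¹ * (q ^ ((1 : ℤ) - i) * qint q i) = ((q ^ (i - 1) : ℂ))⁻¹ := by
      rw [spow i hi1]
      calc (qint q i)⁻¹ * ((q ^ (i-1))⁻¹ * qint q i)
          = (qint q i)⁻¹ * qint q i * (q ^ (i-1))⁻¹ := by ring
        _ = (q ^ (i-1))⁻¹ := by rw [hqiv, one_mul]
    have e2 : (qint q i)⁻¹ * (-q ^ i * qint q i * (q ^ (2 * i))⁻¹) = -((q ^ i : ℂ))⁻¹ := by
      calc (qint q i)⁻¹ * (-q ^ i * qint q i * (q ^ (2*i))⁻¹)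
          = -((qint q i)⁻¹ * qint q i) * (q ^ i * (q ^ (2*i))⁻¹) := by ring
        _ = -((q ^ i : ℂ))⁻¹ := by rw [hqiv, spow2 i]; ring
    rw [e1, e2, hf]
    dsimp only
    have e3 : i - 1 + 1 = i := by omega
    rw [e3, neg_smul, ← sub_eq_add_neg]
  have hEw : actE w = Zg p q := by
    rw [hw, map_sum]
    have hc : ∀ i ∈ Finset.Icc 1 (p - 1),
        actE ((qint q i)⁻¹ • (Zg p q ^ i * Dg p q ^ i)) = f (i - 1) - f i := by
      intro i hi
      rw [Finset.mem_Icc] at hi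
      rw [map_smul]
      exact hterm i hi.1 hi.2
    rw [Finset.sum_congr rfl hc, telescope, hf]
    dsimp only
    have e4 : p - 1 + 1 = p := by omega
    rw [e4, Zg_pow_p, zero_mul, smul_zero, sub_zero, pow_zero, inv_one, one_smul,
      zero_add, pow_one, pow_zero, mul_one]
  set fg : ℕ → CqAlg p q := fun j => ((q ^ j : ℂ))⁻¹ • (Zg p q ^ j * Dg p q ^ (j + 1)) with hfg
  have hterm2 : ∀ i : ℕ, 1 ≤ i → i ≤ p - 1 →
      (qint q i)⁻¹ • actF (Zg p q ^ i * Dg p q ^ i) = fg (i - 1) - fg i := by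
    intro i hi1 hi2
    have hqiv : (qint q i)⁻¹ * qint q i = 1 := inv_mul_cancel₀ (hqi i (by omega) (by omega))
    rw [hLeibF, hF' i, hF i, hKinvZ i]
    rw [mul_smul_comm, smul_mul_assoc, smul_smul, smul_mul_assoc, smul_add, smul_smul, smul_smul]
    have e1 : (qint q i)⁻¹ * (-q ^ i * qint q i * (q ^ (2 * i))⁻¹) = -((q ^ i : ℂ))⁻¹ := by
      calc (qint q i)⁻¹ * (-q ^ i * qint q i * (q ^ (2*i))⁻¹)
          = -((qint q i)⁻¹ * qint q i) * (q ^ i * (q ^ (2*i))⁻¹) := by ring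
        _ = -((q ^ i : ℂ))⁻¹ := by rw [hqiv, spow2 i]; ring
    have e2 : (qint q i)⁻¹ * (qint q i * q ^ ((1 : ℤ) - i)) = ((q ^ (i - 1) : ℂ))⁻¹ := by
      rw [spow i hi1]
      calc (qint q i)⁻¹ * (qint q i * (q ^ (i-1))⁻¹)
          = (qint q i)⁻¹ * qint q i * (q ^ (i-1))⁻¹ := by ring
        _ = (q ^ (i-1))⁻¹ := by rw [hqiv, one_mul]
    rw [e1, e2, hfg]
    dsimp only
    have e3 : i - 1 + 1 = i := by omega
    rw [e3, neg_smul, neg_add_eq_sub]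
  have hFw : actF w = Dg p q := by
    rw [hw, map_sum]
    have hc : ∀ i ∈ Finset.Icc 1 (p - 1),
        actF ((qint q i)⁻¹ • (Zg p q ^ i * Dg p q ^ i)) = fg (i - 1) - fg i := by
      intro i hi
      rw [Finset.mem_Icc] at hi
      rw [map_smul]
      exact hterm2 i hi.1 hi.2
    rw [Finset.sum_congr rfl hc, telescope, hfg]
    dsimp only
    have e4 : p - 1 + 1 = p := by omega
    rw [e4, Dg_pow_p, mul_zero, smul_zero, sub_zero, pow_zero, inv_one, one_smul,
      zero_add, pow_one, pow_zero, one_mul]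
  refine ⟨⟨1, 1, one_ne_zero, one_ne_zero, by rw [hEw, one_smul], by rw [hFw, one_smul]⟩, ?_⟩
  have h2k : ∀ k : ℕ, 0 < k → k < p → q ^ (2 * k) ≠ 1 := fun k h1 h2 => hq2k hp hq h1 h2
  have hdco : ∀ m : ℕ, 0 < m → m < p → dco q m ≠ 0 := fun m h1 h2 => dco_ne q h0 (h2k m h1 h2)
  have hli : LinearIndependent ℂ (vfam p q w) :=
    indep p q hp h0 hq2p hdco (inv_ne_zero (hqi 1 one_pos (by omega))) w hw
  set v := vfam p q w with hv
  set W : Submodule ℂ (CqAlg p q) := Submodule.span ℂ (Set.range v) with hW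
  have hvmem : ∀ i, v i ∈ W := fun i => Submodule.subset_span ⟨i, rfl⟩
  have hvinl : ∀ a : Fin p, v (Sum.inl a) = Zg p q ^ (a : ℕ) := fun a => rfl
  have hvinr : ∀ b : Fin p, v (Sum.inr b)
      = if (b : ℕ) = 0 then w else Dg p q ^ (b : ℕ) := fun b => rfl
  have hZmem : ∀ a : ℕ, a < p → Zg p q ^ a ∈ W := by
    intro a ha
    have h := hvmem (Sum.inl ⟨a, ha⟩)
    rwa [hvinl] at h
  have hDmem : ∀ b : ℕ, b < p → Dg p q ^ b ∈ W := by
    intro b hb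
    by_cases hb0 : b = 0
    · subst hb0
      rw [pow_zero, ← pow_zero (Zg p q)]
      exact hZmem 0 (by omega)
    · have h := hvmem (Sum.inr ⟨b, hb⟩)
      rwa [hvinr, if_neg hb0] at h
  have hwmem : w ∈ W := by
    have h := hvmem (Sum.inr ⟨0, by omega⟩)
    rwa [hvinr, if_pos rfl] at h
  have hKZ : ∀ a : ℕ, actK (Zg p q ^ a) = (q ^ (2 * a)) • Zg p q ^ a := by
    intro a
    have h := hK a 0
    rw [pow_zero, mul_one] at h
    have e : (2 * ((a : ℤ) - ((0 : ℕ) : ℤ))) = ((2 * a : ℕ) : ℤ) := by push_cast; ring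
    rw [e, zpow_natCast] at h
    exact h
  have hKinvD : ∀ b : ℕ, actKinv (Dg p q ^ b) = (q ^ (2 * b)) • Dg p q ^ b := by
    intro b
    have h := hKinv 0 b
    rw [pow_zero, one_mul] at h
    have e : (-2 * (((0 : ℕ) : ℤ) - (b : ℤ))) = ((2 * b : ℕ) : ℤ) := by push_cast; ring
    rw [e, zpow_natCast] at h
    exact h
  have hKmono : ∀ i : ℕ, actK (Zg p q ^ i * Dg p q ^ i) = Zg p q ^ i * Dg p q ^ i := by
    intro i
    have h := hK i i
    rw [sub_self, mul_zero, zpow_zero, one_smul] at h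
    exact h
  have hKinvmono : ∀ i : ℕ, actKinv (Zg p q ^ i * Dg p q ^ i) = Zg p q ^ i * Dg p q ^ i := by
    intro i
    have h := hKinv i i
    rw [sub_self, mul_zero, zpow_zero, one_smul] at h
    exact h
  have hKw : actK w = w := by
    rw [hw, map_sum]
    exact Finset.sum_congr rfl (fun i _ => by rw [map_smul, hKmono])
  have hKinvw : actKinv w = w := by
    rw [hw, map_sum]
    exact Finset.sum_congr rfl (fun i _ => by rw [map_smul, hKinvmono])
  have hK1 : actK (1 : CqAlg p q) = 1 := by
    have h := hKmono 0
    rwa [pow_zero, pow_zero, one_mul] at h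
  have hqint0 : qint q 0 = 0 := by simp [qint]
  have hqint1 : qint q 1 = 1 := by
    simp only [qint, pow_one]
    exact div_self hqd
  have hE1 : actE (1 : CqAlg p q) = 0 := by
    have h := hE 0
    rw [pow_zero, hqint0, mul_zero, zero_smul] at h
    exact h
  have hFZ1 : actF (Zg p q) = 1 := by
    have h := hF 1
    have e : ((1 : ℤ) - ((1 : ℕ) : ℤ)) = 0 := by norm_num
    rw [pow_one, e, zpow_zero, hqint1, mul_one, one_smul] at h
    rw [h]
    norm_num
  have hEgen : ∀ i, actE (v i) ∈ W := by
    rintro (a | b)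
    · rw [hvinl, hE]
      by_cases ha : (a : ℕ) + 1 < p
      · exact W.smul_mem _ (hZmem _ ha)
      · have e : (a : ℕ) + 1 = p := by omega
        rw [e, Zg_pow_p, smul_zero]
        exact W.zero_mem
    · rw [hvinr]
      by_cases hb0 : (b : ℕ) = 0
      · rw [if_pos hb0, hEw, ← pow_one (Zg p q)]
        exact hZmem 1 (by omega)
      · rw [if_neg hb0, hE']
        exact W.smul_mem _ (hDmem _ (by omega))
  have hFgen : ∀ i, actF (v i) ∈ W := by
    rintro (a | b)
    · rw [hvinl, hF]
      exact W.smul_mem _ (hZmem _ (by omega))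
    · rw [hvinr]
      by_cases hb0 : (b : ℕ) = 0
      · rw [if_pos hb0, hFw, ← pow_one (Dg p q)]
        exact hDmem 1 (by omega)
      · rw [if_neg hb0, hF']
        by_cases hbp : (b : ℕ) + 1 < p
        · exact W.smul_mem _ (hDmem _ hbp)
        · have e : (b : ℕ) + 1 = p := by omega
          rw [e, Dg_pow_p, smul_zero]
          exact W.zero_mem
  have hKgen : ∀ i, actK (v i) ∈ W := by
    rintro (a | b)
    · rw [hvinl, hKZ]
      exact W.smul_mem _ (hZmem _ a.isLt)
    · rw [hvinr]
      by_cases hb0 : (b : ℕ) = 0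
      · rw [if_pos hb0, hKw]
        exact hwmem
      · rw [if_neg hb0, hKD]
        exact W.smul_mem _ (hDmem _ b.isLt)
  have hKinvgen : ∀ i, actKinv (v i) ∈ W := by
    rintro (a | b)
    · rw [hvinl, hKinvZ]
      exact W.smul_mem _ (hZmem _ a.isLt)
    · rw [hvinr]
      by_cases hb0 : (b : ℕ) = 0
      · rw [if_pos hb0, hKinvw]
        exact hwmem
      · rw [if_neg hb0, hKinvD]
        exact W.smul_mem _ (hDmem _ b.isLt)
  have hstab : ∀ (T : CqAlg p q →ₗ[ℂ] CqAlg p q), (∀ i, T (v i) ∈ W) → ∀ x ∈ W, T x ∈ W := by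
    intro T hT x hx
    rw [hW] at hx
    induction hx using Submodule.span_induction with
    | mem y hy =>
      obtain ⟨i, rfl⟩ := hy
      exact hT i
    | zero =>
      rw [map_zero]
      exact W.zero_mem
    | add y z _ _ hy hz =>
      rw [map_add]
      exact W.add_mem hy hz
    | smul c y _ hy =>
      rw [map_smul]
      exact W.smul_mem c hy
  have hmin : ∀ W' : Submodule ℂ (CqAlg p q),
      (w ∈ W' ∧ ∀ x ∈ W', actE x ∈ W' ∧ actF x ∈ W' ∧ actK x ∈ W' ∧ actKinv x ∈ W') →
      W ≤ W' := by
    rintro W' ⟨hw', hinv'⟩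
    have hZ1 : Zg p q ∈ W' := by
      have h := (hinv' w hw').1
      rwa [hEw] at h
    have hD1 : Dg p q ∈ W' := by
      have h := (hinv' w hw').2.1
      rwa [hFw] at h
    have hone : (1 : CqAlg p q) ∈ W' := by
      have h := (hinv' _ hZ1).2.1
      rwa [hFZ1] at h
    have hZall : ∀ a : ℕ, a < p → Zg p q ^ a ∈ W' := by
      intro a
      induction a with
      | zero =>
        intro _
        rw [pow_zero]
        exact hone
      | succ a ih =>
        intro ha
        by_cases ha0 : a = 0
        · subst ha0
          rw [pow_one]
          exact hZ1
        · have hZa : Zg p q ^ a ∈ W' := ih (by omega)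
          have hact := (hinv' _ hZa).1
          rw [hE a] at hact
          have hcne : (-q ^ a * qint q a) ≠ 0 :=
            mul_ne_zero (neg_ne_zero.mpr (pow_ne_zero a h0)) (hqi a (by omega) (by omega))
          have h2 := W'.smul_mem (-q ^ a * qint q a)⁻¹ hact
          rwa [smul_smul, inv_mul_cancel₀ hcne, one_smul] at h2
    have hDall : ∀ b : ℕ, b < p → Dg p q ^ b ∈ W' := by
      intro b
      induction b with
      | zero =>
        intro _
        rw [pow_zero]
        exact hone
      | succ b ih =>
        intro hb
        by_cases hb0 : b = 0
        · subst hb0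
          rw [pow_one]
          exact hD1
        · have hDb : Dg p q ^ b ∈ W' := ih (by omega)
          have hact := (hinv' _ hDb).2.1
          rw [hF' b] at hact
          have hcne : (-q ^ b * qint q b) ≠ 0 :=
            mul_ne_zero (neg_ne_zero.mpr (pow_ne_zero b h0)) (hqi b (by omega) (by omega))
          have h2 := W'.smul_mem (-q ^ b * qint q b)⁻¹ hact
          rwa [smul_smul, inv_mul_cancel₀ hcne, one_smul] at h2
    rw [hW]
    apply Submodule.span_le.mpr
    rintro x ⟨i, rfl⟩
    rcases i with a | b
    · rw [hvinl]
      exact hZall _ a.isLt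
    · rw [hvinr]
      by_cases hb0 : (b : ℕ) = 0
      · rw [if_pos hb0]
        exact hw'
      · rw [if_neg hb0]
        exact hDall _ b.isLt
  have hfinrank : Module.finrank ℂ W = 2 * p := by
    rw [hW, finrank_span_eq_card hli]
    simp [two_mul]
  -- indecomposability machinery
  set i0 : Fin p ⊕ Fin p := Sum.inr ⟨0, by omega⟩ with hi0
  set C : ℂ := ∏ j ∈ Finset.Icc 1 (p - 1), (((1 : ℂ) - q ^ (2 * j)) * (1 - (q ^ (2 * j))⁻¹))
    with hC
  have hCne : C ≠ 0 := by
    rw [hC]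
    apply Finset.prod_ne_zero_iff.mpr
    intro j hj
    rw [Finset.mem_Icc] at hj
    have h1 : q ^ (2 * j) ≠ 1 := h2k j (by omega) (by omega)
    apply mul_ne_zero
    · exact sub_ne_zero.mpr (Ne.symm h1)
    · refine sub_ne_zero.mpr (fun hinv => h1 ?_)
      exact inv_eq_one.mp hinv.symm
  have hTw : Tpow q actK (p - 1) w = C • w :=
    Tpow_eigen q actK 1 w (by rw [hKw, one_smul]) (p - 1)
  have hTone : Tpow q actK (p - 1) (1 : CqAlg p q) = C • 1 :=
    Tpow_eigen q actK 1 1 (by rw [hK1, one_smul]) (p - 1)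
  have hTZ : ∀ a : ℕ, 0 < a → a < p → Tpow q actK (p - 1) (Zg p q ^ a) = 0 := by
    intro a ha1 ha2
    rw [Tpow_eigen q actK (q ^ (2 * a)) _ (hKZ a) (p - 1)]
    have hz : (∏ j ∈ Finset.Icc 1 (p - 1),
        ((q ^ (2 * a) - q ^ (2 * j)) * (q ^ (2 * a) - (q ^ (2 * j))⁻¹))) = 0 := by
      apply Finset.prod_eq_zero (Finset.mem_Icc.mpr ⟨by omega, by omega⟩ : a ∈ Finset.Icc 1 (p - 1))
      rw [sub_self, zero_mul]
    rw [hz, zero_smul]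
  have hTD : ∀ b : ℕ, 0 < b → b < p → Tpow q actK (p - 1) (Dg p q ^ b) = 0 := by
    intro b hb1 hb2
    rw [Tpow_eigen q actK ((q ^ (2 * b))⁻¹) _ (hKD b) (p - 1)]
    have hz : (∏ j ∈ Finset.Icc 1 (p - 1),
        (((q ^ (2 * b))⁻¹ - q ^ (2 * j)) * ((q ^ (2 * b))⁻¹ - (q ^ (2 * j))⁻¹))) = 0 := by
      apply Finset.prod_eq_zero (Finset.mem_Icc.mpr ⟨by omega, by omega⟩ : b ∈ Finset.Icc 1 (p - 1))
      rw [sub_self, mul_zero]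
    rw [hz, zero_smul]
  have lemA : ∀ (W' : Submodule ℂ (CqAlg p q)),
      (∀ x ∈ W', actE x ∈ W' ∧ actF x ∈ W' ∧ actK x ∈ W' ∧ actKinv x ∈ W') →
      ∀ (c : Fin p ⊕ Fin p → ℂ), (∑ i, c i • v i) ∈ W' → c i0 ≠ 0 → W ≤ W' := by
    intro W' hinv' c hc hc0
    have hTmem : Tpow q actK (p - 1) (∑ i, c i • v i) ∈ W' :=
      Tpow_mem q actK W' (fun x hx => (hinv' x hx).2.2.1) (p - 1) _ hc
    have hTval : Tpow q actK (p - 1) (∑ i, c i • v i)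
        = (c (Sum.inl ⟨0, by omega⟩) * C) • (1 : CqAlg p q) + (c i0 * C) • w := by
      rw [map_sum, Fintype.sum_sum_type]
      have hl : ∀ a : Fin p, Tpow q actK (p - 1) (c (Sum.inl a) • v (Sum.inl a))
          = if a = (⟨0, by omega⟩ : Fin p) then (c (Sum.inl a) * C) • (1 : CqAlg p q) else 0 := by
        intro a
        rw [map_smul, hvinl]
        by_cases ha0 : a = (⟨0, by omega⟩ : Fin p)
        · rw [if_pos ha0, ha0]
          simp only [Fin.val_mk, pow_zero]
          rw [hTone, smul_smul]
        · rw [if_neg ha0, hTZ _ (by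
            simp only [Fin.ext_iff, Fin.val_mk] at ha0
            omega) a.isLt, smul_zero]
      have hr : ∀ b : Fin p, Tpow q actK (p - 1) (c (Sum.inr b) • v (Sum.inr b))
          = if b = (⟨0, by omega⟩ : Fin p) then (c (Sum.inr b) * C) • w else 0 := by
        intro b
        rw [map_smul, hvinr]
        by_cases hb0 : b = (⟨0, by omega⟩ : Fin p)
        · rw [if_pos hb0, hb0]
          simp only [Fin.val_mk]
          rw [if_true, hTw, smul_smul]
        · have hbv : (b : ℕ) ≠ 0 := by
            simp only [Fin.ext_iff, Fin.val_mk] at hb0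
            omega
          rw [if_neg hb0, if_neg hbv, hTD _ (by omega) b.isLt, smul_zero]
      rw [Finset.sum_congr rfl (fun a _ => hl a), Finset.sum_congr rfl (fun b _ => hr b),
        Finset.sum_ite_eq' Finset.univ, Finset.sum_ite_eq' Finset.univ,
        if_pos (Finset.mem_univ _), if_pos (Finset.mem_univ _)]
    have hy : (c (Sum.inl ⟨0, by omega⟩) * C) • (1 : CqAlg p q) + (c i0 * C) • w ∈ W' := by
      rw [← hTval]
      exact hTmem
    have hEy := (hinv' _ hy).1
    rw [map_add, map_smul, map_smul, hE1, smul_zero, zero_add, hEw] at hEy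
    have hcC : (c i0 * C) ≠ 0 := mul_ne_zero hc0 hCne
    have hZW' : Zg p q ∈ W' := by
      have h2 := W'.smul_mem (c i0 * C)⁻¹ hEy
      rwa [smul_smul, inv_mul_cancel₀ hcC, one_smul] at h2
    have honeW' : (1 : CqAlg p q) ∈ W' := by
      have h2 := (hinv' _ hZW').2.1
      rwa [hFZ1] at h2
    have hwW' : w ∈ W' := by
      have h1 : (c i0 * C) • w ∈ W' := by
        have h2 := W'.sub_mem hy (W'.smul_mem (c (Sum.inl ⟨0, by omega⟩) * C) honeW')
        rwa [add_sub_cancel_left] at h2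
      have h2 := W'.smul_mem (c i0 * C)⁻¹ h1
      rwa [smul_smul, inv_mul_cancel₀ hcC, one_smul] at h2
    exact hmin W' ⟨hwW', hinv'⟩
  refine ⟨W, ⟨hwmem, fun x hx => ⟨hstab actE hEgen x hx, hstab actF hFgen x hx,
    hstab actK hKgen x hx, hstab actKinv hKinvgen x hx⟩⟩, hmin, hfinrank,
    (fun i hi => ⟨hZmem i hi, hDmem i hi⟩), ?_⟩
  intro W1 W2 hinv1 hinv2 hsup hinf
  have hle1 : W1 ≤ W := by rw [← hsup]; exact le_sup_left
  have hle2 : W2 ≤ W := by rw [← hsup]; exact le_sup_right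
  have hw12 : w ∈ W1 ⊔ W2 := by rw [hsup]; exact hwmem
  obtain ⟨x1, hx1, x2, hx2, hx12⟩ := Submodule.mem_sup.mp hw12
  have hx1W : x1 ∈ Submodule.span ℂ (Set.range v) := by rw [← hW]; exact hle1 hx1
  have hx2W : x2 ∈ Submodule.span ℂ (Set.range v) := by rw [← hW]; exact hle2 hx2
  obtain ⟨c1, hc1⟩ := (Submodule.mem_span_range_iff_exists_fun ℂ).mp hx1W
  obtain ⟨c2, hc2⟩ := (Submodule.mem_span_range_iff_exists_fun ℂ).mp hx2W
  have hvio : v i0 = w := by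
    rw [hi0, hvinr]
    simp only [Fin.val_mk]
    rw [if_true]
  have hsum1 : ∑ i, (c1 i + c2 i) • v i = w := by
    simp only [add_smul]
    rw [Finset.sum_add_distrib, hc1, hc2, hx12]
  have hsum2 : ∑ i, (if i = i0 then (1 : ℂ) else 0) • v i = w := by
    simp only [ite_smul, one_smul, zero_smul]
    rw [Finset.sum_ite_eq' Finset.univ, if_pos (Finset.mem_univ _), hvio]
  have hδ : ∑ i, ((c1 i + c2 i) - (if i = i0 then (1 : ℂ) else 0)) • v i = 0 := by
    simp only [sub_smul]
    rw [Finset.sum_sub_distrib, hsum1, hsum2, sub_self]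
  have hco := Fintype.linearIndependent_iff.mp hli _ hδ
  have hco0 := hco i0
  rw [if_pos rfl] at hco0
  by_cases hc10 : c1 i0 = 0
  · have hc20 : c2 i0 ≠ 0 := by
      intro h
      rw [hc10, h] at hco0
      norm_num at hco0
    have hWle : W ≤ W2 := lemA W2 hinv2 c2 (by rw [hc2]; exact hx2) hc20
    left
    rw [← le_bot_iff, ← hinf]
    exact le_inf le_rfl (hle1.trans hWle)
  · have hWle : W ≤ W1 := lemA W1 hinv1 c1 (by rw [hc1]; exact hx1) hc10
    right
    rw [← le_bot_iff, ← hinf]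
    exact le_inf (hle2.trans hWle) le_rfl
end
end

section
/- Let Ω be the unital ℂ-algebra with generators z, ∂, dz, d∂ and relations z^p = 0, ∂^p = 0, ∂z = (q−q⁻¹) + q⁻²z∂, dz·dz = 0, d∂·d∂ = 0, d∂·dz = −q⁻² dz·d∂, dz·z = q⁻² z·dz, d∂·∂ = q² ∂·d∂, dz·∂ = q² ∂·dz, d∂·z = q⁻² z·d∂. Then there is a well-defined ℂ-linear derivation-like differential d: Ω → Ω with d(z) = dz, d(∂) = d∂, d(dz) = 0, d(d∂) = 0, d(1) = 0, satisfying the graded Leibniz rule d(ab) = d(a)b + (−1)^{|a|} a d(b) (with |z| = |∂| = 0, |dz| = |d∂| = 1), and d² = 0. -/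
/-!
STATEMENT 15: On the quantum de Rham complex `Ω = Ωℂ_q[z,∂]` (generators `z, ∂, dz, d∂`
with the listed relations), there is a well-defined ℂ-linear differential `d` with
`d(z) = dz`, `d(∂) = d∂`, `d(dz) = d(d∂) = 0`, `d(1) = 0`, satisfying the graded Leibniz
rule `d(ab) = d(a)b + (−1)^{|a|} a d(b)` (encoded via the parity algebra automorphism
`par : z ↦ z, ∂ ↦ ∂, dz ↦ −dz, d∂ ↦ −d∂`, as `d(ab) = d(a)b + par(a)d(b)`), and `d² = 0`.
-/

noncomputable section

/-- Relations of the quantum de Rham complex `Ωℂ_q[z,∂]`: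
`z = X 0`, `∂ = X 1`, `dz = X 2`, `d∂ = X 3`. -/
inductive oRel (p : ℕ) (q : ℂ) : FreeAlgebra ℂ (Fin 4) → FreeAlgebra ℂ (Fin 4) → Prop
  | znil : oRel p q ((FreeAlgebra.ι ℂ (0 : Fin 4)) ^ p) 0
  | dnil : oRel p q ((FreeAlgebra.ι ℂ (1 : Fin 4)) ^ p) 0
  | dz : oRel p q (FreeAlgebra.ι ℂ (1 : Fin 4) * FreeAlgebra.ι ℂ (0 : Fin 4))
      ((q - q⁻¹) • (1 : FreeAlgebra ℂ (Fin 4))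
        + ((q ^ 2)⁻¹) • (FreeAlgebra.ι ℂ (0 : Fin 4) * FreeAlgebra.ι ℂ (1 : Fin 4)))
  | dzdz : oRel p q ((FreeAlgebra.ι ℂ (2 : Fin 4)) ^ 2) 0
  | dddd : oRel p q ((FreeAlgebra.ι ℂ (3 : Fin 4)) ^ 2) 0
  | dddz : oRel p q (FreeAlgebra.ι ℂ (3 : Fin 4) * FreeAlgebra.ι ℂ (2 : Fin 4))
      ((-(q ^ 2)⁻¹) • (FreeAlgebra.ι ℂ (2 : Fin 4) * FreeAlgebra.ι ℂ (3 : Fin 4)))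
  | dz_z : oRel p q (FreeAlgebra.ι ℂ (2 : Fin 4) * FreeAlgebra.ι ℂ (0 : Fin 4))
      (((q ^ 2)⁻¹) • (FreeAlgebra.ι ℂ (0 : Fin 4) * FreeAlgebra.ι ℂ (2 : Fin 4)))
  | dd_d : oRel p q (FreeAlgebra.ι ℂ (3 : Fin 4) * FreeAlgebra.ι ℂ (1 : Fin 4))
      ((q ^ 2) • (FreeAlgebra.ι ℂ (1 : Fin 4) * FreeAlgebra.ι ℂ (3 : Fin 4)))
  | dz_d : oRel p q (FreeAlgebra.ι ℂ (2 : Fin 4) * FreeAlgebra.ι ℂ (1 : Fin 4))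
      ((q ^ 2) • (FreeAlgebra.ι ℂ (1 : Fin 4) * FreeAlgebra.ι ℂ (2 : Fin 4)))
  | dd_z : oRel p q (FreeAlgebra.ι ℂ (3 : Fin 4) * FreeAlgebra.ι ℂ (0 : Fin 4))
      (((q ^ 2)⁻¹) • (FreeAlgebra.ι ℂ (0 : Fin 4) * FreeAlgebra.ι ℂ (3 : Fin 4)))

/-- The quantum de Rham complex `Ωℂ_q[z,∂]` of `ℂ_q[z,∂]`. -/
def OmegaCq (p : ℕ) (q : ℂ) : Type := RingQuot (oRel p q)

instance (p : ℕ) (q : ℂ) : Ring (OmegaCq p q) := inferInstanceAs (Ring (RingQuot (oRel p q)))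
instance (p : ℕ) (q : ℂ) : Algebra ℂ (OmegaCq p q) :=
  inferInstanceAs (Algebra ℂ (RingQuot (oRel p q)))

def Zo (p : ℕ) (q : ℂ) : OmegaCq p q := RingQuot.mkAlgHom ℂ (oRel p q) (FreeAlgebra.ι ℂ 0)
def Do (p : ℕ) (q : ℂ) : OmegaCq p q := RingQuot.mkAlgHom ℂ (oRel p q) (FreeAlgebra.ι ℂ 1)
def DZo (p : ℕ) (q : ℂ) : OmegaCq p q := RingQuot.mkAlgHom ℂ (oRel p q) (FreeAlgebra.ι ℂ 2)
def DDo (p : ℕ) (q : ℂ) : OmegaCq p q := RingQuot.mkAlgHom ℂ (oRel p q) (FreeAlgebra.ι ℂ 3)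

namespace QdR15

open Finset

variable (p : ℕ) (q : ℂ)

/-! ### Relations in the algebra -/

lemma rZp : Zo p q ^ p = 0 := by
  have h := RingQuot.mkAlgHom_rel ℂ (oRel.znil (p := p) (q := q))
  simp only [map_pow, map_mul, map_zero, sq] at h; exact h

lemma rDp : Do p q ^ p = 0 := by
  have h := RingQuot.mkAlgHom_rel ℂ (oRel.dnil (p := p) (q := q))
  simp only [map_pow, map_mul, map_zero, sq] at h; exact h

lemma rDZ2 : DZo p q * DZo p q = 0 := by
  have h := RingQuot.mkAlgHom_rel ℂ (oRel.dzdz (p := p) (q := q))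
  simp only [map_pow, map_mul, map_zero, sq] at h; exact h

lemma rDD2 : DDo p q * DDo p q = 0 := by
  have h := RingQuot.mkAlgHom_rel ℂ (oRel.dddd (p := p) (q := q))
  simp only [map_pow, map_mul, map_zero, sq] at h; exact h

lemma rdz : Do p q * Zo p q
    = (q - q⁻¹) • (1 : OmegaCq p q) + (q ^ 2)⁻¹ • (Zo p q * Do p q) := by
  have h := RingQuot.mkAlgHom_rel ℂ (oRel.dz (p := p) (q := q))
  simp only [map_mul, map_add, map_smul, map_one] at h; exact h

lemma rdddz : DDo p q * DZo p q = (-(q ^ 2)⁻¹) • (DZo p q * DDo p q) := by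
  have h := RingQuot.mkAlgHom_rel ℂ (oRel.dddz (p := p) (q := q))
  simp only [map_mul, map_add, map_smul, map_one, map_neg, neg_smul] at h
  rw [neg_smul]; exact h

lemma rdzz : DZo p q * Zo p q = (q ^ 2)⁻¹ • (Zo p q * DZo p q) := by
  have h := RingQuot.mkAlgHom_rel ℂ (oRel.dz_z (p := p) (q := q))
  simp only [map_mul, map_add, map_smul, map_one] at h; exact h

lemma rddd : DDo p q * Do p q = (q ^ 2) • (Do p q * DDo p q) := by
  have h := RingQuot.mkAlgHom_rel ℂ (oRel.dd_d (p := p) (q := q))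
  simp only [map_mul, map_add, map_smul, map_one] at h; exact h

lemma rdzd : DZo p q * Do p q = (q ^ 2) • (Do p q * DZo p q) := by
  have h := RingQuot.mkAlgHom_rel ℂ (oRel.dz_d (p := p) (q := q))
  simp only [map_mul, map_add, map_smul, map_one] at h; exact h

lemma rddz : DDo p q * Zo p q = (q ^ 2)⁻¹ • (Zo p q * DDo p q) := by
  have h := RingQuot.mkAlgHom_rel ℂ (oRel.dd_z (p := p) (q := q))
  simp only [map_mul, map_add, map_smul, map_one] at h; exact h

variable {q} in
lemma rdzd' (hq2 : q ^ 2 ≠ 0) : Do p q * DZo p q = (q ^ 2)⁻¹ • (DZo p q * Do p q) := by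
  rw [rdzd, smul_smul, inv_mul_cancel₀ hq2, one_smul]

variable {q} in
lemma rddd' (hq2 : q ^ 2 ≠ 0) : Do p q * DDo p q = (q ^ 2)⁻¹ • (DDo p q * Do p q) := by
  rw [rddd, smul_smul, inv_mul_cancel₀ hq2, one_smul]

variable {q} in
lemma rdzz' (hq2 : q ^ 2 ≠ 0) : Zo p q * DZo p q = (q ^ 2) • (DZo p q * Zo p q) := by
  rw [rdzz, smul_smul, mul_inv_cancel₀ hq2, one_smul]

variable {q} in
lemma rdddz' (hq2 : q ^ 2 ≠ 0) : DZo p q * DDo p q = (-(q ^ 2)) • (DDo p q * DZo p q) := by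
  rw [rdddz, smul_smul]
  rw [show -(q^2) * -(q^2)⁻¹ = 1 by rw [neg_mul_neg, mul_inv_cancel₀ hq2]]
  rw [one_smul]

/-! ### Triangular matrix power -/

lemma tri_pow {A : Type*} [Ring A] [Algebra ℂ A] (Z W : A) (r : ℂ)
    (h : W * Z = r • (Z * W)) (n : ℕ) :
    (!![Z, W; 0, Z] : Matrix (Fin 2) (Fin 2) A) ^ (n + 1) =
      !![Z ^ (n + 1), (∑ i ∈ range (n + 1), r ^ i) • (Z ^ n * W); 0, Z ^ (n + 1)] := by
  induction n with
  | zero => simp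
  | succ n ih =>
    rw [pow_succ, ih, Matrix.mul_fin_two]
    have h1 : ((∑ i ∈ range (n+1), r ^ i) • (Z ^ n * W)) * Z
        = ((∑ i ∈ range (n+1), r ^ i) * r) • (Z ^ (n+1) * W) := by
      rw [smul_mul_assoc, mul_assoc, h, mul_smul_comm, smul_smul, ← mul_assoc, ← pow_succ]
    have h2 : Z ^ (n+1) * W + ((∑ i ∈ range (n+1), r ^ i) * r) • (Z ^ (n+1) * W)
        = (∑ i ∈ range (n+1+1), r ^ i) • (Z ^ (n+1) * W) := by
      conv_rhs => rw [geom_sum_succ]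
      module
    rw [h1, h2]
    simp [pow_succ]

/-! ### The parity automorphism -/

def genPar : Fin 4 → OmegaCq p q := ![Zo p q, Do p q, -DZo p q, -DDo p q]

lemma par_compat : ∀ ⦃x y : FreeAlgebra ℂ (Fin 4)⦄, oRel p q x y →
    FreeAlgebra.lift ℂ (genPar p q) x = FreeAlgebra.lift ℂ (genPar p q) y := by
  intro x y h
  cases h <;>
    simp [genPar, map_pow, rZp, rDp] <;>
    simp [sq, rDZ2, rDD2, rdz, rdddz, rdzz, rddd, rdzd, rddz, smul_add]

def parA : OmegaCq p q →ₐ[ℂ] OmegaCq p q :=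
  RingQuot.liftAlgHom ℂ ⟨FreeAlgebra.lift ℂ (genPar p q), par_compat p q⟩

lemma parA_mk (i : Fin 4) :
    parA p q (RingQuot.mkAlgHom ℂ (oRel p q) (FreeAlgebra.ι ℂ i)) = genPar p q i := by
  exact (RingQuot.liftAlgHom_mkAlgHom_apply ℂ _ (par_compat p q)
    (FreeAlgebra.ι ℂ i)).trans (FreeAlgebra.lift_ι_apply _ _)

/-! ### Induction principle -/

lemma omega_induction {P : OmegaCq p q → Prop}
    (halg : ∀ r : ℂ, P (algebraMap ℂ (OmegaCq p q) r))
    (hgen : ∀ i : Fin 4, P (RingQuot.mkAlgHom ℂ (oRel p q) (FreeAlgebra.ι ℂ i)))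
    (hmul : ∀ a b, P a → P b → P (a * b))
    (hadd : ∀ a b, P a → P b → P (a + b)) :
    ∀ x, P x := by
  intro x
  obtain ⟨y, rfl⟩ := RingQuot.mkAlgHom_surjective ℂ (oRel p q) x
  exact FreeAlgebra.induction ℂ (Fin 4)
    (fun r => by rw [AlgHom.commutes]; exact halg r)
    hgen
    (fun a b ha hb => by rw [map_mul]; exact hmul _ _ ha hb)
    (fun a b ha hb => by rw [map_add]; exact hadd _ _ ha hb) y

/-! ### The matrix representation -/

def genD : Fin 4 → Matrix (Fin 2) (Fin 2) (OmegaCq p q) :=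
  ![!![Zo p q, DZo p q; 0, Zo p q], !![Do p q, DDo p q; 0, Do p q],
    !![-DZo p q, 0; 0, DZo p q], !![-DDo p q, 0; 0, DDo p q]]

lemma genD0 : genD p q 0 = !![Zo p q, DZo p q; 0, Zo p q] := rfl
lemma genD1 : genD p q 1 = !![Do p q, DDo p q; 0, Do p q] := rfl
lemma genD2 : genD p q 2 = !![-DZo p q, 0; 0, DZo p q] := rfl
lemma genD3 : genD p q 3 = !![-DDo p q, 0; 0, DDo p q] := rfl

variable {p q} in
lemma phi_compat (hp1 : 1 ≤ p) (hq2 : q ^ 2 ≠ 0)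
    (hs1 : ∑ i ∈ range p, ((q ^ 2)⁻¹) ^ i = 0)
    (hs2 : ∑ i ∈ range p, (q ^ 2) ^ i = 0) :
    ∀ ⦃x y : FreeAlgebra ℂ (Fin 4)⦄, oRel p q x y →
      FreeAlgebra.lift ℂ (genD p q) x = FreeAlgebra.lift ℂ (genD p q) y := by
  obtain ⟨k, rfl⟩ : ∃ k, p = k + 1 := ⟨p - 1, by omega⟩
  intro x y h
  cases h with
  | znil =>
      rw [map_pow, map_zero, FreeAlgebra.lift_ι_apply, genD0,
        tri_pow _ _ _ (rdzz (k+1) q) k, hs1, rZp]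
      ext i j; fin_cases i <;> fin_cases j <;> simp
  | dnil =>
      rw [map_pow, map_zero, FreeAlgebra.lift_ι_apply, genD1,
        tri_pow _ _ _ (rddd (k+1) q) k, hs2, rDp]
      ext i j; fin_cases i <;> fin_cases j <;> simp
  | dz =>
      simp only [map_mul, map_add, map_smul, map_one, FreeAlgebra.lift_ι_apply,
        genD0, genD1, Matrix.mul_fin_two]
      ext i j; fin_cases i <;> fin_cases j <;>
        simp [Matrix.one_apply, rdz, rddz, rdzd' _ hq2, smul_add, add_comm]
  | dzdz =>
      simp only [map_pow, map_mul, map_zero, FreeAlgebra.lift_ι_apply, genD2, pow_two,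
        Matrix.mul_fin_two]
      ext i j; fin_cases i <;> fin_cases j <;> simp [rDZ2]
  | dddd =>
      simp only [map_pow, map_mul, map_zero, FreeAlgebra.lift_ι_apply, genD3, pow_two,
        Matrix.mul_fin_two]
      ext i j; fin_cases i <;> fin_cases j <;> simp [rDD2]
  | dddz =>
      simp only [map_mul, map_smul, FreeAlgebra.lift_ι_apply, genD2, genD3,
        Matrix.mul_fin_two]
      ext i j; fin_cases i <;> fin_cases j <;> simp [rdddz]
  | dz_z =>
      simp only [map_mul, map_smul, FreeAlgebra.lift_ι_apply, genD0, genD2,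
        Matrix.mul_fin_two]
      ext i j; fin_cases i <;> fin_cases j <;> simp [rdzz, rDZ2]
  | dd_d =>
      simp only [map_mul, map_smul, FreeAlgebra.lift_ι_apply, genD1, genD3,
        Matrix.mul_fin_two]
      ext i j; fin_cases i <;> fin_cases j <;> simp [rddd, rDD2]
  | dz_d =>
      simp only [map_mul, map_smul, FreeAlgebra.lift_ι_apply, genD1, genD2,
        Matrix.mul_fin_two]
      ext i j; fin_cases i <;> fin_cases j <;> simp [rdzd, rdddz' _ hq2]
  | dd_z =>
      simp only [map_mul, map_smul, FreeAlgebra.lift_ι_apply, genD0, genD3,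
        Matrix.mul_fin_two]
      ext i j; fin_cases i <;> fin_cases j <;> simp [rddz, rdddz]

/-! ### The differential -/

section Phi

variable {p q}
variable (hp1 : 1 ≤ p) (hq2 : q ^ 2 ≠ 0)
  (hs1 : ∑ i ∈ range p, ((q ^ 2)⁻¹) ^ i = 0)
  (hs2 : ∑ i ∈ range p, (q ^ 2) ^ i = 0)

def PhiA : OmegaCq p q →ₐ[ℂ] Matrix (Fin 2) (Fin 2) (OmegaCq p q) :=
  RingQuot.liftAlgHom ℂ ⟨FreeAlgebra.lift ℂ (genD p q), phi_compat hp1 hq2 hs1 hs2⟩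

lemma PhiA_mk (i : Fin 4) :
    PhiA hp1 hq2 hs1 hs2 (RingQuot.mkAlgHom ℂ (oRel p q) (FreeAlgebra.ι ℂ i)) = genD p q i :=
  (RingQuot.liftAlgHom_mkAlgHom_apply ℂ _ (phi_compat hp1 hq2 hs1 hs2) _).trans
    (FreeAlgebra.lift_ι_apply _ _)

def E01 : Matrix (Fin 2) (Fin 2) (OmegaCq p q) →ₗ[ℂ] OmegaCq p q where
  toFun M := M 0 1
  map_add' _ _ := rfl
  map_smul' _ _ := rfl

def dA : OmegaCq p q →ₗ[ℂ] OmegaCq p q := E01.comp (PhiA hp1 hq2 hs1 hs2).toLinearMap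

lemma dA_apply (x : OmegaCq p q) : dA hp1 hq2 hs1 hs2 x = PhiA hp1 hq2 hs1 hs2 x 0 1 := rfl

lemma dA_mk (i : Fin 4) :
    dA hp1 hq2 hs1 hs2 (RingQuot.mkAlgHom ℂ (oRel p q) (FreeAlgebra.ι ℂ i))
      = genD p q i 0 1 := by
  exact congrFun (congrFun (PhiA_mk hp1 hq2 hs1 hs2 i) 0) 1

lemma algMap_matrix (r : ℂ) :
    algebraMap ℂ (Matrix (Fin 2) (Fin 2) (OmegaCq p q)) r
      = !![algebraMap ℂ (OmegaCq p q) r, 0; 0, algebraMap ℂ (OmegaCq p q) r] := by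
  ext i j; fin_cases i <;> fin_cases j <;> simp [Matrix.algebraMap_matrix_apply]

lemma dA_algebraMap (r : ℂ) :
    dA hp1 hq2 hs1 hs2 (algebraMap ℂ (OmegaCq p q) r) = 0 := by
  rw [dA_apply, AlgHom.commutes, algMap_matrix]; simp

lemma dA_one : dA hp1 hq2 hs1 hs2 (1 : OmegaCq p q) = 0 := by
  rw [dA_apply, map_one]; simp [Matrix.one_apply]

lemma phi_eq : ∀ x, PhiA hp1 hq2 hs1 hs2 x
    = !![parA p q x, dA hp1 hq2 hs1 hs2 x; 0, x] := by
  refine omega_induction p q ?_ ?_ ?_ ?_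
  · intro r
    rw [AlgHom.commutes, algMap_matrix, AlgHom.commutes (parA p q), dA_algebraMap]
  · intro i
    rw [PhiA_mk, parA_mk, dA_mk]
    fin_cases i <;> rfl
  · intro a b ha hb
    have hd : dA hp1 hq2 hs1 hs2 (a * b)
        = parA p q a * dA hp1 hq2 hs1 hs2 b + dA hp1 hq2 hs1 hs2 a * b := by
      rw [dA_apply, map_mul, ha, hb, Matrix.mul_fin_two]; simp
    rw [map_mul, ha, hb, Matrix.mul_fin_two, map_mul, hd]
    ext i j; fin_cases i <;> fin_cases j <;> simp
  · intro a b ha hb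
    have hd : dA hp1 hq2 hs1 hs2 (a + b)
        = dA hp1 hq2 hs1 hs2 a + dA hp1 hq2 hs1 hs2 b := map_add _ _ _
    rw [map_add, ha, hb, map_add, hd]
    ext i j; fin_cases i <;> fin_cases j <;> simp

lemma leibniz (a b : OmegaCq p q) :
    dA hp1 hq2 hs1 hs2 (a * b)
      = dA hp1 hq2 hs1 hs2 a * b + parA p q a * dA hp1 hq2 hs1 hs2 b := by
  rw [dA_apply, map_mul, phi_eq hp1 hq2 hs1 hs2 a, phi_eq hp1 hq2 hs1 hs2 b,
    Matrix.mul_fin_two]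
  simp [add_comm]

lemma parZo : parA p q (Zo p q) = Zo p q := parA_mk p q 0
lemma parDo : parA p q (Do p q) = Do p q := parA_mk p q 1
lemma parDZo : parA p q (DZo p q) = -DZo p q := parA_mk p q 2
lemma parDDo : parA p q (DDo p q) = -DDo p q := parA_mk p q 3

lemma dZo : dA hp1 hq2 hs1 hs2 (Zo p q) = DZo p q := dA_mk hp1 hq2 hs1 hs2 0
lemma dDo : dA hp1 hq2 hs1 hs2 (Do p q) = DDo p q := dA_mk hp1 hq2 hs1 hs2 1
lemma dDZo : dA hp1 hq2 hs1 hs2 (DZo p q) = 0 := dA_mk hp1 hq2 hs1 hs2 2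
lemma dDDo : dA hp1 hq2 hs1 hs2 (DDo p q) = 0 := dA_mk hp1 hq2 hs1 hs2 3

lemma par_spec : ∀ x : OmegaCq p q, parA p q (parA p q x) = x ∧
    parA p q (dA hp1 hq2 hs1 hs2 x) = - dA hp1 hq2 hs1 hs2 (parA p q x) := by
  refine omega_induction p q ?_ ?_ ?_ ?_
  · intro r
    refine ⟨by rw [AlgHom.commutes, AlgHom.commutes], ?_⟩
    rw [dA_algebraMap, AlgHom.commutes, dA_algebraMap, map_zero, neg_zero]
  · intro i
    fin_cases i
    · refine ⟨?_, ?_⟩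
      · show parA p q (parA p q (Zo p q)) = Zo p q
        rw [parZo, parZo]
      · show parA p q (dA hp1 hq2 hs1 hs2 (Zo p q))
            = - dA hp1 hq2 hs1 hs2 (parA p q (Zo p q))
        rw [dZo, parZo, dZo, parDZo]
    · refine ⟨?_, ?_⟩
      · show parA p q (parA p q (Do p q)) = Do p q
        rw [parDo, parDo]
      · show parA p q (dA hp1 hq2 hs1 hs2 (Do p q))
            = - dA hp1 hq2 hs1 hs2 (parA p q (Do p q))
        rw [dDo, parDo, dDo, parDDo]
    · refine ⟨?_, ?_⟩
      · show parA p q (parA p q (DZo p q)) = DZo p q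
        rw [parDZo, map_neg, parDZo, neg_neg]
      · show parA p q (dA hp1 hq2 hs1 hs2 (DZo p q))
            = - dA hp1 hq2 hs1 hs2 (parA p q (DZo p q))
        rw [dDZo, parDZo, map_neg, dDZo, map_zero, neg_zero, neg_zero]
    · refine ⟨?_, ?_⟩
      · show parA p q (parA p q (DDo p q)) = DDo p q
        rw [parDDo, map_neg, parDDo, neg_neg]
      · show parA p q (dA hp1 hq2 hs1 hs2 (DDo p q))
            = - dA hp1 hq2 hs1 hs2 (parA p q (DDo p q))
        rw [dDDo, parDDo, map_neg, dDDo, map_zero, neg_zero, neg_zero]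
  · intro a b ha hb
    obtain ⟨hpa, hda⟩ := ha
    obtain ⟨hpb, hdb⟩ := hb
    refine ⟨by rw [map_mul, map_mul, hpa, hpb], ?_⟩
    have h1 : parA p q (dA hp1 hq2 hs1 hs2 (a * b))
        = (- dA hp1 hq2 hs1 hs2 (parA p q a)) * parA p q b
          + a * (- dA hp1 hq2 hs1 hs2 (parA p q b)) := by
      rw [leibniz, map_add, map_mul, map_mul, hda, hpa, hdb]
    have h2 : dA hp1 hq2 hs1 hs2 (parA p q (a * b))
        = dA hp1 hq2 hs1 hs2 (parA p q a) * parA p q b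
          + a * dA hp1 hq2 hs1 hs2 (parA p q b) := by
      rw [map_mul, leibniz, hpa]
    rw [h1, h2]
    noncomm_ring
  · intro a b ha hb
    obtain ⟨hpa, hda⟩ := ha
    obtain ⟨hpb, hdb⟩ := hb
    refine ⟨by rw [map_add, map_add, hpa, hpb], ?_⟩
    rw [map_add, map_add, map_add, map_add, hda, hdb, neg_add]

lemma d_d : ∀ x : OmegaCq p q,
    dA hp1 hq2 hs1 hs2 (dA hp1 hq2 hs1 hs2 x) = 0 := by
  refine omega_induction p q ?_ ?_ ?_ ?_
  · intro r; rw [dA_algebraMap, map_zero]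
  · intro i
    fin_cases i
    · show dA hp1 hq2 hs1 hs2 (dA hp1 hq2 hs1 hs2 (Zo p q)) = 0
      rw [dZo, dDZo]
    · show dA hp1 hq2 hs1 hs2 (dA hp1 hq2 hs1 hs2 (Do p q)) = 0
      rw [dDo, dDDo]
    · show dA hp1 hq2 hs1 hs2 (dA hp1 hq2 hs1 hs2 (DZo p q)) = 0
      rw [dDZo, map_zero]
    · show dA hp1 hq2 hs1 hs2 (dA hp1 hq2 hs1 hs2 (DDo p q)) = 0
      rw [dDDo, map_zero]
  · intro a b ha hb
    obtain ⟨hpa, hda⟩ := par_spec hp1 hq2 hs1 hs2 a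
    have hdpa : dA hp1 hq2 hs1 hs2 (parA p q a)
        = - parA p q (dA hp1 hq2 hs1 hs2 a) := by
      rw [hda, neg_neg]
    rw [leibniz, map_add, leibniz, leibniz, ha, hb, hpa, hdpa]
    simp
  · intro a b ha hb
    rw [map_add, map_add, ha, hb, add_zero]

end Phi

end QdR15

theorem quantum_de_rham_differential
    (p : ℕ) (hp : 2 ≤ p)
    (q : ℂ) (hq : q = Complex.exp (Real.pi * Complex.I / p)) :
    ∃ (par : OmegaCq p q →ₐ[ℂ] OmegaCq p q) (d : OmegaCq p q →ₗ[ℂ] OmegaCq p q),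
      -- the parity (grading) automorphism
      par (Zo p q) = Zo p q ∧ par (Do p q) = Do p q ∧
      par (DZo p q) = -DZo p q ∧ par (DDo p q) = -DDo p q ∧
      -- values of the differential
      d (Zo p q) = DZo p q ∧ d (Do p q) = DDo p q ∧
      d (DZo p q) = 0 ∧ d (DDo p q) = 0 ∧ d (1 : OmegaCq p q) = 0 ∧
      -- graded Leibniz rule
      (∀ a b : OmegaCq p q, d (a * b) = d a * b + par a * d b) ∧
      -- `d² = 0`
      (∀ x : OmegaCq p q, d (d x) = 0) := by
  have hp1 : 1 ≤ p := by omega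
  have hp0 : (p : ℂ) ≠ 0 := Nat.cast_ne_zero.mpr (by omega)
  have hq0 : q ≠ 0 := by rw [hq]; exact Complex.exp_ne_zero _
  have hq2 : q ^ 2 ≠ 0 := pow_ne_zero _ hq0
  have hq2p : (q ^ 2) ^ p = 1 := by
    rw [hq, ← pow_mul, ← Complex.exp_nat_mul]
    rw [show ((2 * p : ℕ) : ℂ) * (Real.pi * Complex.I / p) = 2 * Real.pi * Complex.I by
      push_cast; field_simp]
    exact Complex.exp_two_pi_mul_I
  have hq21 : q ^ 2 ≠ 1 := by
    rw [hq, ← Complex.exp_nat_mul]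
    intro h
    obtain ⟨n, hn⟩ := Complex.exp_eq_one_iff.mp h
    have h2 : ((2:ℕ) : ℂ) * (Real.pi * Complex.I / p) = n * (2 * Real.pi * Complex.I) := hn
    have hpi : (Real.pi : ℂ) ≠ 0 := by exact_mod_cast Real.pi_ne_zero
    have hI : Complex.I ≠ 0 := Complex.I_ne_zero
    have hnp : (n : ℂ) * p = 1 := by
      field_simp at h2
      have h3 : (2 : ℂ) * Real.pi * Complex.I * ((n:ℂ) * p) = 2 * Real.pi * Complex.I * 1 := by
        linear_combination (-(Real.pi:ℂ) * Complex.I) * h2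
      exact mul_left_cancel₀ (by simp [hpi, hI]) h3
    have hnp' : (n * p : ℤ) = 1 := by exact_mod_cast hnp
    have hdvd : (p : ℤ) ∣ 1 := ⟨n, by linarith [hnp']⟩
    have := Int.le_of_dvd one_pos hdvd
    omega
  have hs2 : ∑ i ∈ Finset.range p, (q ^ 2) ^ i = 0 := by
    rw [geom_sum_eq hq21, hq2p, sub_self, zero_div]
  have hiqp : ((q ^ 2)⁻¹) ^ p = 1 := by rw [inv_pow, hq2p, inv_one]
  have hiq1 : (q ^ 2)⁻¹ ≠ 1 := fun h => hq21 (by rw [← inv_inv (q ^ 2), h, inv_one])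
  have hs1 : ∑ i ∈ Finset.range p, ((q ^ 2)⁻¹) ^ i = 0 := by
    rw [geom_sum_eq hiq1, hiqp, sub_self, zero_div]
  exact ⟨QdR15.parA p q, QdR15.dA hp1 hq2 hs1 hs2,
    QdR15.parZo, QdR15.parDo, QdR15.parDZo, QdR15.parDDo,
    QdR15.dZo hp1 hq2 hs1 hs2, QdR15.dDo hp1 hq2 hs1 hs2,
    QdR15.dDZo hp1 hq2 hs1 hs2, QdR15.dDDo hp1 hq2 hs1 hs2,
    QdR15.dA_one hp1 hq2 hs1 hs2,
    QdR15.leibniz hp1 hq2 hs1 hs2,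
    QdR15.d_d hp1 hq2 hs1 hs2⟩
end
end

section
/- In the quantum de Rham complex Ωℂ_q[z,∂] carrying the U_q sl(2)-module algebra structure with E ▷ dz = −[2]_q z·dz, K ▷ dz = q² dz, F ▷ dz = 0, E ▷ d∂ = 0, K ▷ d∂ = q⁻² d∂, F ▷ d∂ = −q²[2]_q ∂·d∂ (extended by the module algebra property), the differential d commutes with the U_q sl(2) action: h ▷ d(x) = d(h ▷ x) for all h ∈ U_q sl(2) and x ∈ Ωℂ_q[z,∂]. -/
/-!
STATEMENT 16: On the quantum de Rham complex `Ωℂ_q[z,∂]` with the `U_q sl(2)`-module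
algebra structure determined by `E▷dz = −[2]z·dz`, `K▷dz = q²dz`, `F▷dz = 0`,
`E▷d∂ = 0`, `K▷d∂ = q⁻²d∂`, `F▷d∂ = −q²[2]∂·d∂` (and the standard action on `z, ∂`),
the differential `d` commutes with the `U_q sl(2)` action: `h ▷ d(x) = d(h ▷ x)`.
-/

noncomputable section

/-- Relations of `U_q sl(2)`: `E = X 0`, `F = X 1`, `K = X 2`. -/
inductive uRel (p : ℕ) (q : ℂ) : FreeAlgebra ℂ (Fin 3) → FreeAlgebra ℂ (Fin 3) → Prop
  | KE : uRel p q (FreeAlgebra.ι ℂ (2 : Fin 3) * FreeAlgebra.ι ℂ (0 : Fin 3))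
      ((q ^ 2) • (FreeAlgebra.ι ℂ (0 : Fin 3) * FreeAlgebra.ι ℂ (2 : Fin 3)))
  | KF : uRel p q (FreeAlgebra.ι ℂ (2 : Fin 3) * FreeAlgebra.ι ℂ (1 : Fin 3))
      (((q ^ 2)⁻¹) • (FreeAlgebra.ι ℂ (1 : Fin 3) * FreeAlgebra.ι ℂ (2 : Fin 3)))
  | EF : uRel p q (FreeAlgebra.ι ℂ (0 : Fin 3) * FreeAlgebra.ι ℂ (1 : Fin 3))
      (FreeAlgebra.ι ℂ (1 : Fin 3) * FreeAlgebra.ι ℂ (0 : Fin 3)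
        + ((q - q⁻¹)⁻¹) • (FreeAlgebra.ι ℂ (2 : Fin 3)
            - (FreeAlgebra.ι ℂ (2 : Fin 3)) ^ (2 * p - 1)))
  | Enil : uRel p q ((FreeAlgebra.ι ℂ (0 : Fin 3)) ^ p) 0
  | Fnil : uRel p q ((FreeAlgebra.ι ℂ (1 : Fin 3)) ^ p) 0
  | Kord : uRel p q ((FreeAlgebra.ι ℂ (2 : Fin 3)) ^ (2 * p)) 1

/-- The restricted quantum group `U_q sl(2)`. -/
def Uq (p : ℕ) (q : ℂ) : Type := RingQuot (uRel p q)

instance (p : ℕ) (q : ℂ) : Ring (Uq p q) := inferInstanceAs (Ring (RingQuot (uRel p q)))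
instance (p : ℕ) (q : ℂ) : Algebra ℂ (Uq p q) :=
  inferInstanceAs (Algebra ℂ (RingQuot (uRel p q)))

def Eu (p : ℕ) (q : ℂ) : Uq p q := RingQuot.mkAlgHom ℂ (uRel p q) (FreeAlgebra.ι ℂ 0)
def Fu (p : ℕ) (q : ℂ) : Uq p q := RingQuot.mkAlgHom ℂ (uRel p q) (FreeAlgebra.ι ℂ 1)
def Ku (p : ℕ) (q : ℂ) : Uq p q := RingQuot.mkAlgHom ℂ (uRel p q) (FreeAlgebra.ι ℂ 2)

/-- Induction principle for `OmegaCq`. -/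
lemma omega_induction (p : ℕ) (q : ℂ) {P : OmegaCq p q → Prop}
    (halg : ∀ r : ℂ, P (algebraMap ℂ (OmegaCq p q) r))
    (hz : P (Zo p q)) (hd : P (Do p q)) (hdz : P (DZo p q)) (hdd : P (DDo p q))
    (hmul : ∀ a b, P a → P b → P (a * b))
    (hadd : ∀ a b, P a → P b → P (a + b)) : ∀ x, P x := by
  intro x
  obtain ⟨y, rfl⟩ := RingQuot.mkAlgHom_surjective ℂ (oRel p q) x
  induction y using FreeAlgebra.induction with
  | grade0 r => rw [AlgHom.commutes]; exact halg r
  | grade1 i => fin_cases i; exacts [hz, hd, hdz, hdd]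
  | mul a b ha hb => rw [map_mul]; exact hmul _ _ ha hb
  | add a b ha hb => rw [map_add]; exact hadd _ _ ha hb

/-- Induction principle for `Uq`. -/
lemma uq_induction (p : ℕ) (q : ℂ) {P : Uq p q → Prop}
    (halg : ∀ r : ℂ, P (algebraMap ℂ (Uq p q) r))
    (hE : P (Eu p q)) (hF : P (Fu p q)) (hK : P (Ku p q))
    (hmul : ∀ a b, P a → P b → P (a * b))
    (hadd : ∀ a b, P a → P b → P (a + b)) : ∀ x, P x := by
  intro x
  obtain ⟨y, rfl⟩ := RingQuot.mkAlgHom_surjective ℂ (uRel p q) x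
  induction y using FreeAlgebra.induction with
  | grade0 r => rw [AlgHom.commutes]; exact halg r
  | grade1 i => fin_cases i; exacts [hE, hF, hK]
  | mul a b ha hb => rw [map_mul]; exact hmul _ _ ha hb
  | add a b ha hb => rw [map_add]; exact hadd _ _ ha hb

theorem de_rham_differential_commutes_with_uqsl2
    (p : ℕ) (hp : 2 ≤ p)
    (q : ℂ) (hq : q = Complex.exp (Real.pi * Complex.I / p))
    -- the parity automorphism and the differential
    (par : OmegaCq p q →ₐ[ℂ] OmegaCq p q)
    (hparz : par (Zo p q) = Zo p q) (hpard : par (Do p q) = Do p q)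
    (hpardz : par (DZo p q) = -DZo p q) (hpardd : par (DDo p q) = -DDo p q)
    (d : OmegaCq p q →ₗ[ℂ] OmegaCq p q)
    (hdz : d (Zo p q) = DZo p q) (hdd : d (Do p q) = DDo p q)
    (hddz : d (DZo p q) = 0) (hddd : d (DDo p q) = 0) (hd1 : d (1 : OmegaCq p q) = 0)
    (hLeib : ∀ a b : OmegaCq p q, d (a * b) = d a * b + par a * d b)
    -- the `U_q sl(2)`-module algebra structure
    (ρ : Uq p q →ₐ[ℂ] Module.End ℂ (OmegaCq p q))
    (hEz : ρ (Eu p q) (Zo p q) = -q • (Zo p q * Zo p q))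
    (hKz : ρ (Ku p q) (Zo p q) = (q ^ 2) • Zo p q)
    (hFz : ρ (Fu p q) (Zo p q) = 1)
    (hEd : ρ (Eu p q) (Do p q) = 1)
    (hKd : ρ (Ku p q) (Do p q) = ((q ^ 2)⁻¹) • Do p q)
    (hFd : ρ (Fu p q) (Do p q) = -q • (Do p q * Do p q))
    (hEdz : ρ (Eu p q) (DZo p q) = (-(q + q⁻¹)) • (Zo p q * DZo p q))
    (hKdz : ρ (Ku p q) (DZo p q) = (q ^ 2) • DZo p q)
    (hFdz : ρ (Fu p q) (DZo p q) = 0)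
    (hEdd : ρ (Eu p q) (DDo p q) = 0)
    (hKdd : ρ (Ku p q) (DDo p q) = ((q ^ 2)⁻¹) • DDo p q)
    (hFdd : ρ (Fu p q) (DDo p q) = (-(q ^ 2) * (q + q⁻¹)) • (Do p q * DDo p q))
    -- the module algebra property
    (hLeibE : ∀ a b : OmegaCq p q,
      ρ (Eu p q) (a * b) = a * ρ (Eu p q) b + ρ (Eu p q) a * ρ (Ku p q) b)
    (hLeibF : ∀ a b : OmegaCq p q,
      ρ (Fu p q) (a * b) = ρ (Ku p q ^ (2 * p - 1)) a * ρ (Fu p q) b + ρ (Fu p q) a * b)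
    (hLeibK : ∀ a b : OmegaCq p q, ρ (Ku p q) (a * b) = ρ (Ku p q) a * ρ (Ku p q) b)
    (hE1 : ρ (Eu p q) (1 : OmegaCq p q) = 0)
    (hF1 : ρ (Fu p q) (1 : OmegaCq p q) = 0)
    (hK1 : ρ (Ku p q) (1 : OmegaCq p q) = 1) :
    ∀ (h : Uq p q) (x : OmegaCq p q), ρ h (d x) = d (ρ h x) := by
  have hq0 : q ≠ 0 := by rw [hq]; exact Complex.exp_ne_zero _
  set E := ρ (Eu p q) with hE
  set F := ρ (Fu p q) with hF
  set K := ρ (Ku p q) with hK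
  -- relations in OmegaCq
  have rel_dz_z : DZo p q * Zo p q = (q ^ 2)⁻¹ • (Zo p q * DZo p q) := by
    have h := RingQuot.mkAlgHom_rel ℂ (oRel.dz_z (p := p) (q := q))
    simp [Zo, DZo, map_mul, map_smul] at h; exact h
  have rel_dd_d : DDo p q * Do p q = (q ^ 2) • (Do p q * DDo p q) := by
    have h := RingQuot.mkAlgHom_rel ℂ (oRel.dd_d (p := p) (q := q))
    simp [Do, DDo, map_mul, map_smul] at h; exact h
  have rel_dzdz : DZo p q * DZo p q = 0 := by
    have h := RingQuot.mkAlgHom_rel ℂ (oRel.dzdz (p := p) (q := q))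
    simp [DZo, map_pow, map_mul, sq] at h; exact h
  have rel_dddd : DDo p q * DDo p q = 0 := by
    have h := RingQuot.mkAlgHom_rel ℂ (oRel.dddd (p := p) (q := q))
    simp [DDo, map_pow, map_mul, sq] at h; exact h
  -- helper about algebraMap
  have halgK : ∀ r : ℂ, K (algebraMap ℂ (OmegaCq p q) r) = algebraMap ℂ (OmegaCq p q) r := by
    intro r
    rw [Algebra.algebraMap_eq_smul_one, map_smul, hK1]
  have halgE : ∀ r : ℂ, E (algebraMap ℂ (OmegaCq p q) r) = 0 := by
    intro r
    rw [Algebra.algebraMap_eq_smul_one, map_smul, hE1, smul_zero]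
  have halgF : ∀ r : ℂ, F (algebraMap ℂ (OmegaCq p q) r) = 0 := by
    intro r
    rw [Algebra.algebraMap_eq_smul_one, map_smul, hF1, smul_zero]
  have hdalg : ∀ r : ℂ, d (algebraMap ℂ (OmegaCq p q) r) = 0 := by
    intro r
    rw [Algebra.algebraMap_eq_smul_one, map_smul, hd1, smul_zero]
  -- Step A : par commutes with K
  have parK : ∀ x, par (K x) = K (par x) := by
    refine omega_induction p q ?_ ?_ ?_ ?_ ?_ ?_ ?_
    · intro r; rw [halgK, AlgHom.commutes, halgK]
    · rw [hKz, map_smul, hparz, hKz]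
    · rw [hKd, map_smul, hpard, hKd]
    · rw [hKdz, map_smul, hpardz, map_neg, hKdz, smul_neg]
    · rw [hKdd, map_smul, hpardd, map_neg, hKdd, smul_neg]
    · intro a b ha hb
      rw [hLeibK, map_mul, ha, hb, map_mul, hLeibK]
    · intro a b ha hb
      rw [map_add, map_add, ha, hb, map_add, map_add]
  have parKpow : ∀ (n : ℕ) (x), par ((K ^ n) x) = (K ^ n) (par x) := by
    intro n
    induction n with
    | zero => intro x; simp
    | succ n ih =>
        intro x
        rw [pow_succ, Module.End.mul_apply, Module.End.mul_apply, ih, parK]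
  -- Step B : d commutes with K
  have dK : ∀ x, d (K x) = K (d x) := by
    refine omega_induction p q ?_ ?_ ?_ ?_ ?_ ?_ ?_
    · intro r; rw [halgK, hdalg]; simp
    · rw [hKz, map_smul, hdz, hKdz]
    · rw [hKd, map_smul, hdd, hKdd]
    · rw [hKdz, map_smul, hddz, smul_zero, map_zero]
    · rw [hKdd, map_smul, hddd, smul_zero, map_zero]
    · intro a b ha hb
      rw [hLeibK, hLeib, ha, hb, parK, hLeib, map_add, hLeibK, hLeibK]
    · intro a b ha hb
      rw [map_add, map_add, ha, hb, map_add, map_add]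
  have dKpow : ∀ (n : ℕ) (x), d ((K ^ n) x) = (K ^ n) (d x) := by
    intro n
    induction n with
    | zero => intro x; simp
    | succ n ih =>
        intro x
        rw [pow_succ, Module.End.mul_apply, Module.End.mul_apply, ih, dK]
  -- Step C : par commutes with E
  have parE : ∀ x, par (E x) = E (par x) := by
    refine omega_induction p q ?_ ?_ ?_ ?_ ?_ ?_ ?_
    · intro r; rw [halgE, AlgHom.commutes, halgE, map_zero]
    · rw [hEz, hparz, hEz, map_smul, map_mul, hparz]
    · rw [hEd, hpard, hEd, map_one]
    · rw [hEdz, hpardz, map_neg, hEdz, map_smul, map_mul, hparz, hpardz,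
        mul_neg, smul_neg, neg_smul, neg_neg]
    · rw [hEdd, hpardd, map_neg, hEdd, map_zero, neg_zero]
    · intro a b ha hb
      rw [hLeibE, map_add, map_mul, map_mul, ha, hb, parK, map_mul, hLeibE]
    · intro a b ha hb
      rw [map_add, map_add, ha, hb, map_add, map_add]
  -- Step D : par commutes with F
  have hKm : ρ (Ku p q ^ (2 * p - 1)) = K ^ (2 * p - 1) := by rw [map_pow]
  have parF : ∀ x, par (F x) = F (par x) := by
    refine omega_induction p q ?_ ?_ ?_ ?_ ?_ ?_ ?_
    · intro r; rw [halgF, AlgHom.commutes, halgF, map_zero]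
    · rw [hFz, hparz, hFz, map_one]
    · rw [hFd, hpard, hFd, map_smul, map_mul, hpard]
    · rw [hFdz, hpardz, map_neg, hFdz, map_zero, neg_zero]
    · rw [hFdd, hpardd, map_neg, hFdd, map_smul, map_mul, hpard, hpardd,
        mul_neg, smul_neg]
    · intro a b ha hb
      rw [hLeibF, hKm, map_add, map_mul, map_mul, ha, hb, parKpow, map_mul, hLeibF, hKm]
    · intro a b ha hb
      rw [map_add, map_add, ha, hb, map_add, map_add]
  -- Step E : d commutes with E
  have dE : ∀ x, d (E x) = E (d x) := by
    refine omega_induction p q ?_ ?_ ?_ ?_ ?_ ?_ ?_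
    · intro r; rw [halgE, hdalg]; simp
    · rw [hEz, map_smul, hLeib, hparz, hdz, rel_dz_z, hEdz, smul_add,
        smul_smul, ← add_smul]
      congr 1
      field_simp
      ring
    · rw [hEd, hdd, hEdd, hd1]
    · rw [hEdz, map_smul, hLeib, hparz, hdz, hddz, rel_dzdz]
      simp
    · rw [hEdd, hddd, map_zero, map_zero]
    · intro a b ha hb
      rw [hLeibE, map_add, hLeib, hLeib, ha, hb, dK, parE, hLeib, map_add,
        hLeibE (d a) b, hLeibE (par a) (d b)]
      abel
    · intro a b ha hb
      rw [map_add, map_add, ha, hb, map_add, map_add]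
  -- Step F : d commutes with F
  have dF : ∀ x, d (F x) = F (d x) := by
    refine omega_induction p q ?_ ?_ ?_ ?_ ?_ ?_ ?_
    · intro r; rw [halgF, hdalg]; simp
    · rw [hFz, hdz, hFdz, hd1]
    · rw [hFd, map_smul, hLeib, hpard, hdd, rel_dd_d, hFdd, smul_add,
        smul_smul, ← add_smul]
      congr 1
      field_simp
      ring
    · rw [hFdz, hddz, map_zero, map_zero]
    · rw [hFdd, map_smul, hLeib, hpard, hdd, hddd, rel_dddd]
      simp
    · intro a b ha hb
      rw [hLeibF, hKm, map_add, hLeib, hLeib, ha, hb, dKpow, parKpow, parF,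
        hLeib, map_add, hLeibF (d a) b, hLeibF (par a) (d b), hKm]
      abel
    · intro a b ha hb
      rw [map_add, map_add, ha, hb, map_add, map_add]
  -- conclude by induction over Uq
  intro h
  induction h using uq_induction with
  | halg r =>
      intro x
      rw [AlgHom.commutes, Module.algebraMap_end_apply, Module.algebraMap_end_apply,
        map_smul]
  | hE => intro x; exact (dE x).symm
  | hF => intro x; exact (dF x).symm
  | hK => intro x; exact (dK x).symm
  | hmul a b ha hb =>
      intro x
      rw [map_mul, Module.End.mul_apply, Module.End.mul_apply, hb x, ha ((ρ b) x)]
  | hadd a b ha hb =>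
      intro x
      rw [map_add, LinearMap.add_apply, LinearMap.add_apply, map_add, ha, hb]
end
end
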